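/- Let Δ_{i−1} be a partially-canonical drawing of T[i−1], let v_i be the i-th internal node labeled visited in the bottom-up visit of T, and let Δ_i be the drawing of T obtained from Δ_{i−1} by redrawing the subtree T_{v_i} — keeping v_i and every node not in T_{v_i} fixed — as an upward canonical drawing if v_i is the root or y(v_i) ≤ y(p(v_i)) in Δ_{i−1}, and as a downward canonical drawing otherwise. Then Δ_i is a partially-canonical drawing of T[i]. -/

import Mathlib

open Real Set

/-- A finite rooted ordered tree: a root, a parent function (fixing the root),
well-foundedness (every node reaches the root by iterating `parent`), and a
rank function giving the left-to-right order among siblings. -/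
structure OTree (V : Type) [Fintype V] [DecidableEq V] where
  root : V
  parent : V → V
  parent_root : parent root = root
  reach : ∀ v : V, ∃ n : ℕ, parent^[n] v = root
  rank : V → ℕ
  rank_inj : ∀ u v : V, u ≠ root → v ≠ root →
    parent u = parent v → rank u = rank v → u = v

variable {V : Type} [Fintype V] [DecidableEq V]

/-- `c` is a child of `v`. -/
def OTree.IsChild (T : OTree V) (c v : V) : Prop := c ≠ T.root ∧ T.parent c = v

/-- A leaf is a node with no children. -/
def OTree.IsLeaf (T : OTree V) (v : V) : Prop := ∀ c, ¬ T.IsChild c v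

/-- `a` is an ancestor of `w`, or `a = w`. -/
def OTree.AncEq (T : OTree V) (a w : V) : Prop := ∃ n : ℕ, T.parent^[n] w = a

/-- A drawing is strictly upward if every non-root node lies strictly below its parent. -/
def IsUpwardD (T : OTree V) (Γ : V → ℝ × ℝ) : Prop :=
  ∀ v, v ≠ T.root → (Γ v).2 < (Γ (T.parent v)).2

/-- A straight-line drawing is planar if it is injective on nodes and any two distinct
edge segments meet only in (images of) shared endpoints. -/
def IsPlanarD (T : OTree V) (Γ : V → ℝ × ℝ) : Prop :=
  Function.Injective Γ ∧
  ∀ u v : V, u ≠ T.root → v ≠ T.root → u ≠ v →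
    segment ℝ (Γ u) (Γ (T.parent u)) ∩ segment ℝ (Γ v) (Γ (T.parent v)) ⊆
      Γ '' (({u, T.parent u} : Set V) ∩ {v, T.parent v})

/-- The angle of the direction from `p` to `q`. -/
noncomputable def dirAngle (p q : ℝ × ℝ) : ℝ :=
  Complex.arg (Complex.ofReal (q.1 - p.1) + Complex.ofReal (q.2 - p.2) * Complex.I)

/-- Normalization of an angle into the window `[a, a + 2π)`. -/
noncomputable def normAngle (a θ : ℝ) : ℝ := θ - 2 * π * (⌊(θ - a) / (2 * π)⌋ : ℤ)

/-- The angle of the direction from `Γ v` to `Γ w`, normalized into `[a, a + 2π)`. -/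
noncomputable def angFrom (Γ : V → ℝ × ℝ) (a : ℝ) (v w : V) : ℝ :=
  normAngle a (dirAngle (Γ v) (Γ w))

/-- A drawing is order-preserving if around every node the counterclockwise cyclic
order of the incident edges is: edge to the parent, then edges to the children in
left-to-right order. -/
def IsOrderPreservingD (T : OTree V) (Γ : V → ℝ × ℝ) : Prop :=
  ∀ v : V, ∃ a : ℝ,
    (∀ c₁ c₂ : V, T.IsChild c₁ v → T.IsChild c₂ v → T.rank c₁ < T.rank c₂ →
      angFrom Γ a v c₁ < angFrom Γ a v c₂) ∧
    (v ≠ T.root → ∀ c : V, T.IsChild c v →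
      angFrom Γ a v (T.parent v) < angFrom Γ a v c)

/-- A grid drawing places every node at integer coordinates. -/
def IsGridD (Γ : V → ℝ × ℝ) : Prop :=
  ∀ v, (∃ a : ℤ, (Γ v).1 = a) ∧ (∃ b : ℤ, (Γ v).2 = b)

/-- The width of a (grid) drawing: number of grid columns met by its bounding box. -/
noncomputable def gW (Γ : V → ℝ × ℝ) : ℝ :=
  sSup (Set.range fun v => (Γ v).1) - sInf (Set.range fun v => (Γ v).1) + 1

/-- The height of a (grid) drawing: number of grid rows met by its bounding box. -/
noncomputable def gH (Γ : V → ℝ × ℝ) : ℝ :=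
  sSup (Set.range fun v => (Γ v).2) - sInf (Set.range fun v => (Γ v).2) + 1

/-- The drawing at time `t` of the linear morph from `Γ₀` to `Γ₁`. -/
def lerpD (t : ℝ) (Γ₀ Γ₁ : V → ℝ × ℝ) : V → ℝ × ℝ :=
  fun v => (1 - t) • Γ₀ v + t • Γ₁ v

/-- The linear morph from `Γ₀` to `Γ₁` is planar. -/
def PlanarStep (T : OTree V) (Γ₀ Γ₁ : V → ℝ × ℝ) : Prop :=
  ∀ t ∈ Set.Icc (0:ℝ) 1, IsPlanarD T (lerpD t Γ₀ Γ₁)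

/-- The linear morph from `Γ₀` to `Γ₁` is upward. -/
def UpwardStep (T : OTree V) (Γ₀ Γ₁ : V → ℝ × ℝ) : Prop :=
  ∀ t ∈ Set.Icc (0:ℝ) 1, IsUpwardD T (lerpD t Γ₀ Γ₁)

/-- `w` strictly precedes `v` in the pre-order traversal of `T`: either `w` is a proper
ancestor of `v`, or there are siblings `a, b` with `rank a < rank b` such that `a` is an
ancestor (or equal) of `w` and `b` is an ancestor (or equal) of `v`. -/
def preLT (T : OTree V) (w v : V) : Prop :=
  (w ≠ v ∧ T.AncEq w v) ∨
  ∃ a b : V, a ≠ T.root ∧ b ≠ T.root ∧ T.parent a = T.parent b ∧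
    T.rank a < T.rank b ∧ T.AncEq a w ∧ T.AncEq b v

/-- The depth of a node: the least number of `parent` steps reaching the root. -/
noncomputable def depthT (T : OTree V) (v : V) : ℕ := Nat.find (T.reach v)

/-- The pre-order index of `w` within the subtree rooted at `u`. -/
noncomputable def relIdx (T : OTree V) (u w : V) : ℕ :=
  Nat.card {w' : V // T.AncEq u w' ∧ preLT T w' w}

/-- The drawing of the subtree rooted at `u` is an upward canonical drawing: for some
grid point `(x₀, y₀)` (the position of `u`), every node `w` of the subtree is placed
at `x₀ +` (pre-order index of `w` in the subtree) and `y₀ -` (depth of `w` below `u`). -/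
def UpCanonicalOn (T : OTree V) (u : V) (Γ : V → ℝ × ℝ) : Prop :=
  ∃ x₀ y₀ : ℤ, ∀ w, T.AncEq u w →
    Γ w = (((x₀ + (relIdx T u w : ℤ) : ℤ) : ℝ),
           ((y₀ - ((depthT T w : ℤ) - (depthT T u : ℤ)) : ℤ) : ℝ))

/-- Counterclockwise rotation of the plane by `π/2` about the origin. -/
def rotCCW (p : ℝ × ℝ) : ℝ × ℝ := (-p.2, p.1)

/-- The drawing of the subtree rooted at `u` is a downward canonical drawing:
an upward canonical drawing rotated by `π` (i.e. by `π/2` twice). -/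
def DownCanonicalOn (T : OTree V) (u : V) (Γ : V → ℝ × ℝ) : Prop :=
  ∃ Γ' : V → ℝ × ℝ, UpCanonicalOn T u Γ' ∧
    ∀ w, T.AncEq u w → Γ w = rotCCW (rotCCW (Γ' w))

/-- An upward canonical drawing of the whole tree. -/
def IsUpCanonical (T : OTree V) (Γ : V → ℝ × ℝ) : Prop := UpCanonicalOn T T.root Γ

/-- A leftward canonical drawing: an upward canonical drawing rotated
counterclockwise by `π/2`. -/
def IsLeftCanonical (T : OTree V) (Γ : V → ℝ × ℝ) : Prop :=
  ∃ Γ', IsUpCanonical T Γ' ∧ ∀ v, Γ v = rotCCW (Γ' v)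

/-- A downward canonical drawing: an upward canonical drawing rotated by `π`. -/
def IsDownCanonical (T : OTree V) (Γ : V → ℝ × ℝ) : Prop :=
  ∃ Γ', IsUpCanonical T Γ' ∧ ∀ v, Γ v = rotCCW (rotCCW (Γ' v))

/-- A rightward canonical drawing: an upward canonical drawing rotated
counterclockwise by `3π/2`. -/
def IsRightCanonical (T : OTree V) (Γ : V → ℝ × ℝ) : Prop :=
  ∃ Γ', IsUpCanonical T Γ' ∧ ∀ v, Γ v = rotCCW (rotCCW (rotCCW (Γ' v)))

/-- A canonical drawing: upward, leftward, downward or rightward canonical. -/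
def IsCanonical (T : OTree V) (Γ : V → ℝ × ℝ) : Prop :=
  IsUpCanonical T Γ ∨ IsLeftCanonical T Γ ∨ IsDownCanonical T Γ ∨ IsRightCanonical T Γ

/-- The `ℓ`-box centered at the point `c`: the axis-parallel square of side `ℓ`
with corners `c ± (ℓ/2, ℓ/2)`. -/
def boxAt (ℓ : ℝ) (c : ℝ × ℝ) : Set (ℝ × ℝ) :=
  {p | |p.1 - c.1| ≤ ℓ / 2 ∧ |p.2 - c.2| ≤ ℓ / 2}

/-- `S` is a (filled) sector of a circumference centered at `c`: for some radius
`ρ > 0` and angles `θ₁ ≤ θ₂ ≤ θ₁ + 2π`, `S` is the set of points `c + r·(cos θ, sin θ)`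
with `0 ≤ r ≤ ρ` and `θ₁ ≤ θ ≤ θ₂`. -/
def IsSector (c : ℝ × ℝ) (S : Set (ℝ × ℝ)) : Prop :=
  ∃ ρ θ₁ θ₂ : ℝ, 0 < ρ ∧ θ₁ ≤ θ₂ ∧ θ₂ ≤ θ₁ + 2 * π ∧
    S = {p | ∃ r θ : ℝ, 0 ≤ r ∧ r ≤ ρ ∧ θ₁ ≤ θ ∧ θ ≤ θ₂ ∧
      p = (c.1 + r * Real.cos θ, c.2 + r * Real.sin θ)}

/-- `Γ` is a partially-canonical drawing of `T` with respect to the labeling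
`visited` (Definition 2 of the paper, with `n` the number of nodes and `ℓ₀` the
parameter `150·D₀²·n`): an order-preserving straight-line planar grid drawing such
that
(a) the subtree of each visited node is drawn upward or downward canonically
    (upward when the node does not lie above its parent, downward otherwise);
(b) each edge `e = (v, u)` from an unvisited node `v` to a child `u` has a sector
    `S u` of a circumference centered at `v` such that (b.i) `S u` encloses the
    `2n`-box of `u`; (b.ii) `S u` contains no node except `v` and nodes of `T_u` and
    meets no edge except `e` and edges of `T_u` (other edges may touch `S u` only at
    `v`); (b.iii) `S u ∩ B_{ℓ₀}(v)` contains a `2n`-box with integer corner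
    coordinates whose center is weakly below `v` iff `u` is; (b.iv) the sectors of
    distinct edges out of `v` have disjoint interiors;
(c) the `(ℓ₀+4n)`-boxes of distinct unvisited nodes are disjoint;
(d) the `(ℓ₀+4n)`-box of an unvisited node `v` contains no node other than `v`, and
    every edge or sector meeting it belongs to an edge incident to `v`. -/
def PartiallyCanonical (T : OTree V) (visited : V → Prop) (ℓ₀ : ℝ)
    (Γ : V → ℝ × ℝ) : Prop :=
  IsOrderPreservingD T Γ ∧ IsPlanarD T Γ ∧ IsGridD Γ ∧
  -- (a)
  (∀ u, visited u →
    (UpCanonicalOn T u Γ ∨ DownCanonicalOn T u Γ) ∧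
    (u ≠ T.root →
      ((Γ u).2 ≤ (Γ (T.parent u)).2 → UpCanonicalOn T u Γ) ∧
      ((Γ (T.parent u)).2 < (Γ u).2 → DownCanonicalOn T u Γ))) ∧
  -- (b)
  (∃ S : V → Set (ℝ × ℝ),
    (∀ u, u ≠ T.root → ¬ visited (T.parent u) →
      IsSector (Γ (T.parent u)) (S u) ∧
      boxAt (2 * (Fintype.card V : ℝ)) (Γ u) ⊆ S u ∧
      (∀ w, Γ w ∈ S u → w = T.parent u ∨ T.AncEq u w) ∧
      (∀ w, w ≠ T.root → ¬ T.AncEq u w →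
        segment ℝ (Γ w) (Γ (T.parent w)) ∩ S u ⊆ {Γ (T.parent u)}) ∧
      (∃ cu : ℤ × ℤ,
        boxAt (2 * (Fintype.card V : ℝ)) ((cu.1 : ℝ), (cu.2 : ℝ)) ⊆
          S u ∩ boxAt ℓ₀ (Γ (T.parent u)) ∧
        ((cu.2 : ℝ) ≤ (Γ (T.parent u)).2 ↔ (Γ u).2 ≤ (Γ (T.parent u)).2))) ∧
    (∀ u u', u ≠ T.root → u' ≠ T.root → ¬ visited (T.parent u) →
      T.parent u = T.parent u' → u ≠ u' →
      interior (S u) ∩ interior (S u') = ∅) ∧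
    (∀ v, ¬ visited v → ∀ u, u ≠ T.root → ¬ visited (T.parent u) →
      (S u ∩ boxAt (ℓ₀ + 4 * (Fintype.card V : ℝ)) (Γ v)).Nonempty →
      T.parent u = v ∨ u = v)) ∧
  -- (c)
  (∀ v w, ¬ visited v → ¬ visited w → v ≠ w →
    boxAt (ℓ₀ + 4 * (Fintype.card V : ℝ)) (Γ v) ∩
      boxAt (ℓ₀ + 4 * (Fintype.card V : ℝ)) (Γ w) = ∅) ∧
  -- (d)
  (∀ v, ¬ visited v →
    (∀ w, w ≠ v → Γ w ∉ boxAt (ℓ₀ + 4 * (Fintype.card V : ℝ)) (Γ v)) ∧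
    (∀ w, w ≠ T.root →
      (segment ℝ (Γ w) (Γ (T.parent w)) ∩
        boxAt (ℓ₀ + 4 * (Fintype.card V : ℝ)) (Γ v)).Nonempty →
      T.parent w = v ∨ w = v))

namespace OTree

variable {V : Type} [Fintype V] [DecidableEq V] {T : OTree V}

lemma iterate_root (T : OTree V) (n : ℕ) : T.parent^[n] T.root = T.root :=
  Function.iterate_fixed T.parent_root n

lemma eq_root_of_cycle {x : V} {k : ℕ} (hk : k ≠ 0) (h : T.parent^[k] x = x) :
    x = T.root := by
  obtain ⟨m, hm⟩ := T.reach x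
  have hcyc : ∀ q : ℕ, T.parent^[q * k] x = x := by
    intro q
    induction q with
    | zero => simp
    | succ q ih =>
      have hq : (q + 1) * k = k + q * k := by ring
      rw [hq, Function.iterate_add_apply, ih, h]
  have h2 : T.parent^[m * k] x = T.root := by
    have hmk : m ≤ m * k := Nat.le_mul_of_pos_right m (Nat.pos_of_ne_zero hk)
    calc T.parent^[m*k] x = T.parent^[(m*k - m) + m] x := by rw [Nat.sub_add_cancel hmk]
      _ = T.parent^[m*k - m] (T.parent^[m] x) := Function.iterate_add_apply _ _ _ _
      _ = T.root := by rw [hm, iterate_root]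
  exact (hcyc m).symm.trans h2

lemma parent_ne_self {x : V} (hx : x ≠ T.root) : T.parent x ≠ x := by
  intro h
  exact hx (eq_root_of_cycle (k := 1) one_ne_zero (by simpa using h))

lemma AncEq.refl (T : OTree V) (w : V) : T.AncEq w w := ⟨0, rfl⟩

lemma AncEq.trans {a b c : V} (h1 : T.AncEq a b) (h2 : T.AncEq b c) : T.AncEq a c := by
  obtain ⟨n, hn⟩ := h1; obtain ⟨m, hm⟩ := h2
  exact ⟨n + m, by rw [Function.iterate_add_apply, hm, hn]⟩

lemma AncEq.antisymm {a b : V} (h1 : T.AncEq a b) (h2 : T.AncEq b a) : a = b := by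
  obtain ⟨n, hn⟩ := h1; obtain ⟨m, hm⟩ := h2
  rcases Nat.eq_zero_or_pos (m + n) with h | h
  · obtain ⟨hm0, hn0⟩ := Nat.add_eq_zero.mp h
    subst hn0
    simpa using hn.symm
  · have hc : T.parent^[m + n] b = b := by
      rw [Function.iterate_add_apply, hn, hm]
    have hb : b = T.root := eq_root_of_cycle h.ne' hc
    subst hb
    rw [iterate_root] at hn
    exact hn.symm

lemma ancEq_root (T : OTree V) (w : V) : T.AncEq T.root w := by
  obtain ⟨n, hn⟩ := T.reach w; exact ⟨n, hn⟩

lemma ancEq_parent {w : V} : T.AncEq (T.parent w) w := ⟨1, rfl⟩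

lemma AncEq.parent_right {a w : V} (h : T.AncEq a w) (hne : a ≠ w) :
    T.AncEq a (T.parent w) := by
  obtain ⟨n, hn⟩ := h
  cases n with
  | zero => exact absurd hn.symm hne
  | succ n => exact ⟨n, by rw [← Function.iterate_succ_apply]; exact hn⟩

lemma AncEq.comparable {a b w : V} (h1 : T.AncEq a w) (h2 : T.AncEq b w) :
    T.AncEq a b ∨ T.AncEq b a := by
  obtain ⟨n, hn⟩ := h1; obtain ⟨m, hm⟩ := h2
  rcases le_total n m with h | h
  · right
    exact ⟨m - n, by rw [← hn, ← Function.iterate_add_apply, Nat.sub_add_cancel h, hm]⟩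
  · left
    exact ⟨n - m, by rw [← hm, ← Function.iterate_add_apply, Nat.sub_add_cancel h, hn]⟩

/-! ### depth -/

lemma depthT_spec (T : OTree V) (v : V) : T.parent^[depthT T v] v = T.root :=
  Nat.find_spec (T.reach v)

lemma depthT_le {T : OTree V} {v : V} {n : ℕ} (h : T.parent^[n] v = T.root) :
    depthT T v ≤ n := Nat.find_le h

lemma depthT_root (T : OTree V) : depthT T T.root = 0 :=
  Nat.le_zero.mp (depthT_le (by simp))

lemma depthT_eq_zero_iff {v : V} : depthT T v = 0 ↔ v = T.root := by
  constructor
  · intro h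
    have := depthT_spec T v
    rwa [h] at this
  · rintro rfl; exact depthT_root T

lemma depthT_parent {v : V} (hv : v ≠ T.root) :
    depthT T v = depthT T (T.parent v) + 1 := by
  have h1 : depthT T v ≠ 0 := fun h => hv (depthT_eq_zero_iff.mp h)
  have hs := depthT_spec T v
  apply le_antisymm
  · have := depthT_spec T (T.parent v)
    exact depthT_le (by rw [Function.iterate_succ_apply]; exact this)
  · obtain ⟨d, hd⟩ := Nat.exists_eq_succ_of_ne_zero h1
    rw [hd]
    have : T.parent^[d] (T.parent v) = T.root := by
      rw [← Function.iterate_succ_apply]; rw [hd] at hs; exact hs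
    exact Nat.succ_le_succ (depthT_le this)

lemma depthT_iterate (T : OTree V) :
    ∀ (n : ℕ) (w : V), depthT T (T.parent^[n] w) + n = depthT T w ∨
      T.parent^[n] w = T.root := by
  intro n
  induction n with
  | zero => intro w; left; simp
  | succ n ih =>
    intro w
    by_cases hw : w = T.root
    · right; rw [hw, iterate_root]
    · rcases ih (T.parent w) with h | h
      · left
        rw [Function.iterate_succ_apply]
        rw [depthT_parent hw]
        omega
      · right
        rwa [Function.iterate_succ_apply]

lemma AncEq.depth_le {a w : V} (h : T.AncEq a w) : depthT T a ≤ depthT T w := by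
  obtain ⟨n, hn⟩ := h
  rcases depthT_iterate T n w with h | h
  · rw [hn] at h; omega
  · rw [hn] at h; rw [h, depthT_root]; exact Nat.zero_le _

lemma AncEq.depth_add {a w : V} (h : T.AncEq a w) (hne : a ≠ T.root) :
    ∃ n, T.parent^[n] w = a ∧ depthT T a + n = depthT T w := by
  obtain ⟨n, hn⟩ := h
  rcases depthT_iterate T n w with h | h
  · exact ⟨n, hn, by rw [hn] at h; exact h⟩
  · rw [hn] at h; exact absurd h hne

lemma AncEq.depth_lt {a w : V} (h : T.AncEq a w) (hne : a ≠ w) :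
    depthT T a < depthT T w := by
  by_cases hr : a = T.root
  · subst hr
    rcases Nat.eq_zero_or_pos (depthT T w) with h0 | h0
    · exact absurd (depthT_eq_zero_iff.mp h0).symm hne
    · rw [depthT_root]; exact h0
  · obtain ⟨n, hn, hd⟩ := h.depth_add hr
    cases n with
    | zero => exact absurd hn.symm (by simpa using hne)
    | succ n => omega

lemma AncEq.eq_of_depth_eq {a w : V} (h : T.AncEq a w)
    (hd : depthT T a = depthT T w) : a = w := by
  by_contra hne
  exact absurd hd (Nat.ne_of_lt (h.depth_lt hne))

lemma eq_of_ancEq_sibling {a b : V} (ha : a ≠ T.root) (h : T.AncEq a b)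
    (hp : T.parent a = T.parent b) : a = b := by
  by_cases hb : b = T.root
  · subst hb
    obtain ⟨n, hn⟩ := h
    rw [iterate_root] at hn
    exact absurd hn.symm ha
  · exact h.eq_of_depth_eq (by rw [depthT_parent ha, depthT_parent hb, hp])

lemma depthT_lt_card (T : OTree V) (v : V) : depthT T v < Fintype.card V := by
  have key : ∀ i j : ℕ, i < j → j ≤ depthT T v →
      T.parent^[i] v ≠ T.parent^[j] v := by
    intro i j hlt hj hij
    have hc : T.parent^[j - i] (T.parent^[i] v) = T.parent^[i] v := by
      rw [← Function.iterate_add_apply, Nat.sub_add_cancel hlt.le]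
      exact hij.symm
    have hroot : T.parent^[i] v = T.root := eq_root_of_cycle (by omega) hc
    have := depthT_le hroot
    omega
  have hinj : Function.Injective
      (fun i : Fin (depthT T v + 1) => T.parent^[(i : ℕ)] v) := by
    intro i j hij
    by_contra hne
    have hne' : (i : ℕ) ≠ (j : ℕ) := fun h => hne (Fin.ext h)
    rcases Nat.lt_or_ge (i : ℕ) (j : ℕ) with h | h
    · exact key i j h (by omega) hij
    · exact key j i (by omega) (by omega) hij.symm
  have := Fintype.card_le_of_injective _ hinj
  simp at this
  omega

end OTree
section PreLT

variable {V : Type} [Fintype V] [DecidableEq V] {T : OTree V}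

open OTree

lemma preLT_irrefl (T : OTree V) (w : V) : ¬ preLT T w w := by
  rintro (⟨hne, _⟩ | ⟨a, b, ha, hb, hp, hr, haw, hbw⟩)
  · exact hne rfl
  · rcases haw.comparable hbw with h | h
    · exact absurd (eq_of_ancEq_sibling ha h hp) (by
        intro h'; subst h'; exact lt_irrefl _ hr)
    · exact absurd (eq_of_ancEq_sibling hb h hp.symm).symm (by
        intro h'; subst h'; exact lt_irrefl _ hr)

lemma preLT_of_anc {u w : V} (h : T.AncEq u w) (hne : u ≠ w) : preLT T u w :=
  Or.inl ⟨hne, h⟩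

lemma preLT_sibling {a b : V} (ha : a ≠ T.root) (hb : b ≠ T.root)
    (hp : T.parent a = T.parent b) (hr : T.rank a < T.rank b) : preLT T a b :=
  Or.inr ⟨a, b, ha, hb, hp, hr, AncEq.refl T a, AncEq.refl T b⟩

/-- descendants through a fork: if `a` is an ancestor of `u` with sibling `b`
an ancestor of `w`, then `preLT u w` when `rank a < rank b`. -/
lemma preLT_fork {a b u w : V} (ha : a ≠ T.root) (hb : b ≠ T.root)
    (hp : T.parent a = T.parent b) (hr : T.rank a < T.rank b)
    (hau : T.AncEq a u) (hbw : T.AncEq b w) : preLT T u w :=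
  Or.inr ⟨a, b, ha, hb, hp, hr, hau, hbw⟩

lemma preLT_trans {u v w : V} (h1 : preLT T u v) (h2 : preLT T v w) :
    preLT T u w := by
  rcases h1 with ⟨hne1, h1⟩ | ⟨a, b, ha, hb, hp, hr, hau, hbv⟩
  · -- u strict ancestor of v
    rcases h2 with ⟨hne2, h2⟩ | ⟨a2, b2, ha2, hb2, hp2, hr2, ha2v, hb2w⟩
    · refine Or.inl ⟨?_, h1.trans h2⟩
      intro h; subst h
      exact hne2 (h2.antisymm h1)
    · -- u anc v, fork (a2, b2) with a2 anc v
      rcases h1.comparable ha2v with h | h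
      ·
        -- h : T.AncEq u a2
        by_cases hua : u = a2
        · subst hua
          exact preLT_fork ha2 hb2 hp2 hr2 (AncEq.refl T u) hb2w
        · -- u strict anc a2, so u anc (parent a2) = parent b2, so u anc b2 anc w
          have h3 : T.AncEq u (T.parent a2) := h.parent_right hua
          have h4 : T.AncEq u b2 := (hp2 ▸ h3).trans ancEq_parent
          have h5 : T.AncEq u w := h4.trans hb2w
          refine Or.inl ⟨?_, h5⟩
          intro h; subst h
          -- w anc b2 and b2 anc w: b2 = w = u, then u anc parent a2 = parent u
          have hb2u : b2 = u := hb2w.antisymm h4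
          subst hb2u
          -- h3 : AncEq b2 (parent a2) = AncEq b2 (parent b2): cycle
          rw [hp2] at h3
          obtain ⟨n, hn⟩ := h3
          have : T.parent^[n + 1] b2 = b2 := by
            rw [Function.iterate_add_apply]; simpa using hn
          exact hb2 (eq_root_of_cycle (Nat.succ_ne_zero n) this)
      · -- a2 anc-eq u
        exact preLT_fork ha2 hb2 hp2 hr2 h hb2w
  · -- fork (a, b) : a anc u, b anc v
    rcases h2 with ⟨hne2, h2⟩ | ⟨a2, b2, ha2, hb2, hp2, hr2, ha2v, hb2w⟩
    · exact preLT_fork ha hb hp hr hau (hbv.trans h2)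
    · rcases hbv.comparable ha2v with h | h
      · -- b anc-eq a2
        by_cases hba : b = a2
        · subst hba
          -- forks at same parent: rank a < rank b = rank a2 < rank b2
          exact preLT_fork ha hb2 (hp.trans hp2) (hr.trans hr2) hau hb2w
        · have h3 : T.AncEq b (T.parent a2) := h.parent_right hba
          have h4 : T.AncEq b b2 := (hp2 ▸ h3).trans ancEq_parent
          exact preLT_fork ha hb hp hr hau (h4.trans hb2w)
      · -- a2 anc-eq b
        by_cases hab : a2 = b
        · subst hab
          exact preLT_fork ha hb2 (hp.trans hp2) (hr.trans hr2) hau hb2w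
        · have h3 : T.AncEq a2 (T.parent b) := h.parent_right hab
          have h4 : T.AncEq a2 a := (hp ▸ h3).trans ancEq_parent
          exact preLT_fork ha2 hb2 hp2 hr2 (h4.trans hau) hb2w

lemma preLT_trichotomy {u w : V} (hne : u ≠ w) : preLT T u w ∨ preLT T w u := by
  classical
  have hex : ∃ n, T.AncEq (T.parent^[n] u) w := by
    obtain ⟨n, hn⟩ := T.reach u
    exact ⟨n, hn ▸ ancEq_root T w⟩
  set n₀ := Nat.find hex with hn₀def
  have hspec : T.AncEq (T.parent^[n₀] u) w := Nat.find_spec hex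
  cases hn : n₀ with
  | zero =>
    rw [hn] at hspec
    exact Or.inl (preLT_of_anc (by simpa using hspec) hne)
  | succ k =>
    set a' := T.parent^[k] u with ha'def
    have hnota : ¬ T.AncEq a' w := by
      rw [ha'def]
      exact Nat.find_min hex (by omega)
    have ha'root : a' ≠ T.root := by
      intro h
      exact hnota (h ▸ ancEq_root T w)
    have hpa' : T.parent a' = T.parent^[n₀] u := by
      rw [ha'def, hn]
      exact (Function.iterate_succ_apply' T.parent k u).symm
    have ha'u : T.AncEq a' u := ⟨k, rfl⟩
    -- minimal m with parent^[m] w = parent a'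
    have hex2 : ∃ m, T.parent^[m] w = T.parent^[n₀] u := hspec
    set m₀ := Nat.find hex2 with hm₀def
    have hspec2 : T.parent^[m₀] w = T.parent^[n₀] u := Nat.find_spec hex2
    cases hm : m₀ with
    | zero =>
      rw [hm] at hspec2
      simp at hspec2
      -- w = parent^[n₀] u, so w anc u, w ≠ u
      exact Or.inr (preLT_of_anc ⟨n₀, hspec2.symm⟩ (Ne.symm hne))
    | succ j =>
      set b' := T.parent^[j] w with hb'def
      rw [hm] at hspec2
      have hpb' : T.parent b' = T.parent^[n₀] u := by
        rw [hb'def]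
        exact (Function.iterate_succ_apply' T.parent j w).symm.trans hspec2
      have hb'root : b' ≠ T.root := by
        intro h
        have hj : T.parent^[j] w = T.parent^[n₀] u := by
          rw [← hpb', h, T.parent_root, ← h]
        have hle : Nat.find hex2 ≤ j := Nat.find_le hj
        omega
      have hb'w : T.AncEq b' w := ⟨j, rfl⟩
      have hab : a' ≠ b' := by
        intro h
        exact hnota (h ▸ hb'w)
      have hpp : T.parent a' = T.parent b' := by rw [hpa', hpb']
      rcases Nat.lt_or_ge (T.rank a') (T.rank b') with h | h
      · exact Or.inl (preLT_fork ha'root hb'root hpp h ha'u hb'w)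
      · rcases Nat.lt_or_ge (T.rank b') (T.rank a') with h' | h'
        · exact Or.inr (preLT_fork hb'root ha'root hpp.symm h' hb'w ha'u)
        · exact absurd (T.rank_inj a' b' ha'root hb'root hpp (by omega)) hab

end PreLT
section RelIdx

variable {V : Type} [Fintype V] [DecidableEq V] {T : OTree V}

open OTree

lemma ne_root_of_strict_desc {vi w : V} (h : T.AncEq vi w) (hne : w ≠ vi) :
    w ≠ T.root := by
  intro hr
  subst hr
  exact hne ((ancEq_root T vi).antisymm h)

lemma preLT_parent {w : V} (hw : w ≠ T.root) : preLT T (T.parent w) w :=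
  preLT_of_anc ancEq_parent (parent_ne_self hw)

lemma preLT_to_subroot {u w w' : V} (hw : T.AncEq u w) (h1 : ¬ T.AncEq u w')
    (h2 : preLT T w' w) : preLT T w' u := by
  rcases h2 with ⟨hne, hanc⟩ | ⟨a, b, ha, hb, hp, hr, haw, hbw⟩
  · rcases hanc.comparable hw with h | h
    · refine preLT_of_anc h ?_
      intro hh; subst hh
      exact h1 (AncEq.refl T w')
    · exact absurd h h1
  · by_cases hub : u = b
    · exact preLT_fork ha hb hp hr haw (hub ▸ AncEq.refl T u)
    · rcases hbw.comparable hw with h | h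
      · exact preLT_fork ha hb hp hr haw h
      · have h3 : T.AncEq u (T.parent b) := h.parent_right hub
        have h4 : T.AncEq u a := (hp ▸ h3).trans ancEq_parent
        exact absurd (h4.trans haw) h1

lemma preLT_from_subroot {u w w' : V} (hw : T.AncEq u w) (h1 : ¬ T.AncEq u w')
    (h2 : preLT T w' u) : preLT T w' w := by
  rcases h2 with ⟨hne, hanc⟩ | ⟨a, b, ha, hb, hp, hr, haw, hbu⟩
  · refine preLT_of_anc (hanc.trans hw) ?_
    intro hh
    exact h1 (hh.symm ▸ hw)
  · exact preLT_fork ha hb hp hr haw (hbu.trans hw)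

/-- the set counted by `relIdx`. -/
def relSet (T : OTree V) (u w : V) : Set V := {w' | T.AncEq u w' ∧ preLT T w' w}

lemma relIdx_eq_ncard (T : OTree V) (u w : V) :
    relIdx T u w = (relSet T u w).ncard :=
  Nat.card_coe_set_eq (relSet T u w)

lemma relIdx_self (T : OTree V) (u : V) : relIdx T u u = 0 := by
  rw [relIdx_eq_ncard]
  convert Set.ncard_empty V
  ext w'
  simp only [relSet, Set.mem_setOf_eq, Set.mem_empty_iff_false, iff_false, not_and]
  intro h1 h2
  by_cases h : w' = u
  · exact preLT_irrefl T u (h ▸ h2)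
  · exact preLT_irrefl T w' (preLT_trans h2 (preLT_of_anc h1 (Ne.symm h)))

lemma relIdx_lt_relIdx {vi x y : V} (hx : T.AncEq vi x) (hlt : preLT T x y) :
    relIdx T vi x < relIdx T vi y := by
  rw [relIdx_eq_ncard, relIdx_eq_ncard]
  apply Set.ncard_lt_ncard _ (Set.toFinite _)
  constructor
  · rintro w' ⟨h1, h2⟩
    exact ⟨h1, preLT_trans h2 hlt⟩
  · intro hsub
    have : x ∈ relSet T vi x := hsub ⟨hx, hlt⟩
    exact preLT_irrefl T x this.2

lemma relIdx_ne {vi x y : V} (hx : T.AncEq vi x) (hy : T.AncEq vi y)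
    (hne : x ≠ y) : relIdx T vi x ≠ relIdx T vi y := by
  rcases preLT_trichotomy hne with h | h
  · exact Nat.ne_of_lt (relIdx_lt_relIdx hx h)
  · exact Nat.ne_of_gt (relIdx_lt_relIdx hy h)

lemma relIdx_lt_card (T : OTree V) (u w : V) :
    relIdx T u w < Fintype.card V := by
  rw [relIdx_eq_ncard]
  have h1 : relSet T u w ⊂ Set.univ := by
    rw [Set.ssubset_univ_iff]
    intro h
    have : w ∈ relSet T u w := h ▸ Set.mem_univ w
    exact preLT_irrefl T w this.2
  have := Set.ncard_lt_ncard h1 Set.finite_univ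
  rwa [Set.ncard_univ, Nat.card_eq_fintype_card] at this

lemma relIdx_add {vi u w : V} (hu : T.AncEq vi u) (hw : T.AncEq u w) :
    relIdx T vi w = relIdx T vi u + relIdx T u w := by
  rw [relIdx_eq_ncard, relIdx_eq_ncard, relIdx_eq_ncard]
  have hBC : relSet T vi w = relSet T vi u ∪ relSet T u w := by
    ext w'
    simp only [relSet, Set.mem_setOf_eq, Set.mem_union]
    constructor
    · rintro ⟨h1, h2⟩
      by_cases h : T.AncEq u w'
      · exact Or.inr ⟨h, h2⟩
      · exact Or.inl ⟨h1, preLT_to_subroot hw h h2⟩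
    · rintro (⟨h1, h2⟩ | ⟨h1, h2⟩)
      · refine ⟨h1, ?_⟩
        by_cases h : T.AncEq u w'
        · exact absurd h (by
            intro hh
            by_cases he : w' = u
            · exact preLT_irrefl T u (he ▸ h2)
            · exact preLT_irrefl T w' (preLT_trans h2 (preLT_of_anc hh (Ne.symm he))))
        · exact preLT_from_subroot hw h h2
      · exact ⟨hu.trans h1, h2⟩
  have hdisj : Disjoint (relSet T vi u) (relSet T u w) := by
    rw [Set.disjoint_left]
    rintro w' ⟨_, h2⟩ ⟨h3, _⟩
    by_cases he : w' = u
    · exact preLT_irrefl T u (he ▸ h2)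
    · exact preLT_irrefl T w' (preLT_trans h2 (preLT_of_anc h3 (Ne.symm he)))
  rw [hBC, Set.ncard_union_eq hdisj (Set.toFinite _) (Set.toFinite _)]

lemma depthT_sub_le {vi w : V} (h : T.AncEq vi w) :
    depthT T w - depthT T vi < Fintype.card V :=
  lt_of_le_of_lt (Nat.sub_le _ _) (depthT_lt_card T w)

end RelIdx
section Geom

open Real Complex

/-! ### normAngle -/

lemma normAngle_eq_self {a θ : ℝ} (h1 : a ≤ θ) (h2 : θ < a + 2 * π) :
    normAngle a θ = θ := by
  unfold normAngle
  have : ⌊(θ - a) / (2 * π)⌋ = 0 := by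
    rw [Int.floor_eq_zero_iff]
    constructor
    · exact div_nonneg (by linarith) (le_of_lt Real.two_pi_pos)
    · rw [div_lt_one Real.two_pi_pos]; linarith
  rw [this]; simp

lemma normAngle_eq_add {a θ : ℝ} (h1 : a - 2 * π ≤ θ) (h2 : θ < a) :
    normAngle a θ = θ + 2 * π := by
  unfold normAngle
  have : ⌊(θ - a) / (2 * π)⌋ = -1 := by
    rw [Int.floor_eq_iff]
    constructor
    · rw [le_div_iff₀ Real.two_pi_pos]; push_cast; linarith
    · rw [div_lt_iff₀ Real.two_pi_pos]; push_cast; linarith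
  rw [this]; push_cast; ring

/-! ### dirAngle -/

lemma dir_re (p q : ℝ × ℝ) :
    (Complex.ofReal (q.1 - p.1) + Complex.ofReal (q.2 - p.2) * Complex.I).re
      = q.1 - p.1 := by simp

lemma dir_im (p q : ℝ × ℝ) :
    (Complex.ofReal (q.1 - p.1) + Complex.ofReal (q.2 - p.2) * Complex.I).im
      = q.2 - p.2 := by simp

/-- an angle of a vector with `re ≥ 1`, `im = -1`. -/
lemma arg_down_right {z : ℂ} (hre : 1 ≤ z.re) (him : z.im = -1) :
    Complex.arg z = Real.arcsin (-(1 / Real.sqrt (z.re ^ 2 + 1))) := by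
  rw [Complex.arg_of_re_nonneg (by linarith), Complex.norm_def,
    Complex.normSq_apply, him]
  have h1 : z.re * z.re + -1 * -1 = z.re ^ 2 + 1 := by ring
  rw [h1]
  congr 1
  have h2 : (0:ℝ) < Real.sqrt (z.re ^ 2 + 1) := Real.sqrt_pos.mpr (by positivity)
  field_simp

/-- an angle of a vector with `re ≤ -1`, `im = 1`. -/
lemma arg_up_left {z : ℂ} (hre : z.re ≤ -1) (him : z.im = 1) :
    Complex.arg z = Real.arcsin (-(1 / Real.sqrt (z.re ^ 2 + 1))) + π := by
  rw [Complex.arg_of_re_neg_of_im_nonneg (by linarith) (by rw [him]; norm_num),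
    Complex.norm_def, Complex.normSq_apply, him]
  have h1 : z.re * z.re + 1 * 1 = z.re ^ 2 + 1 := by ring
  rw [h1]
  congr 2
  simp only [Complex.neg_im, him]
  have h2 : (0:ℝ) < Real.sqrt (z.re ^ 2 + 1) := Real.sqrt_pos.mpr (by positivity)
  field_simp

lemma arcsin_term_mem {d : ℝ} (hd : 1 ≤ d) :
    -(1 / Real.sqrt (d ^ 2 + 1)) ∈ Set.Icc (-1 : ℝ) 1 := by
  have h1 : (1:ℝ) ≤ Real.sqrt (d ^ 2 + 1) := by
    have := Real.sqrt_le_sqrt (show (1:ℝ) ≤ d^2+1 by nlinarith)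
    rwa [Real.sqrt_one] at this
  have h2 : (0:ℝ) < Real.sqrt (d ^ 2 + 1) := by linarith
  constructor
  · have : 1 / Real.sqrt (d ^ 2 + 1) ≤ 1 := by
      rw [div_le_one h2]; linarith
    linarith
  · have : 0 < 1 / Real.sqrt (d ^ 2 + 1) := by positivity
    linarith

lemma arcsin_term_mono {d1 d2 : ℝ} (h1 : 1 ≤ d1) (h : d1 < d2) :
    Real.arcsin (-(1 / Real.sqrt (d1 ^ 2 + 1))) <
      Real.arcsin (-(1 / Real.sqrt (d2 ^ 2 + 1))) := by
  apply Real.strictMonoOn_arcsin (arcsin_term_mem h1) (arcsin_term_mem (by linarith))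
  have hs1 : (0:ℝ) < Real.sqrt (d1 ^ 2 + 1) := Real.sqrt_pos.mpr (by positivity)
  have hs2 : Real.sqrt (d1 ^ 2 + 1) < Real.sqrt (d2 ^ 2 + 1) :=
    Real.sqrt_lt_sqrt (by positivity) (by nlinarith)
  have := one_div_lt_one_div_of_lt hs1 hs2
  linarith

lemma arcsin_term_neg {d : ℝ} (hd : 1 ≤ d) :
    Real.arcsin (-(1 / Real.sqrt (d ^ 2 + 1))) < 0 := by
  rw [Real.arcsin_neg]
  have h2 : (0:ℝ) < Real.sqrt (d ^ 2 + 1) := Real.sqrt_pos.mpr (by positivity)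
  have : 0 < Real.arcsin (1 / Real.sqrt (d ^ 2 + 1)) := by
    rw [Real.arcsin_pos]; positivity
  linarith

lemma arcsin_term_ge {d : ℝ} (hd : 1 ≤ d) :
    -(π/2) < Real.arcsin (-(1 / Real.sqrt (d ^ 2 + 1))) := by
  rw [Real.neg_pi_div_two_lt_arcsin]
  have h1 : (1:ℝ) < Real.sqrt (d ^ 2 + 1) := by
    have := Real.sqrt_lt_sqrt (by norm_num : (0:ℝ) ≤ 1) (show (1:ℝ) < d^2+1 by nlinarith)
    rwa [Real.sqrt_one] at this
  have : 1 / Real.sqrt (d ^ 2 + 1) < 1 := by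
    rw [div_lt_one (by linarith)]; linarith
  linarith

/-! ### boxes and segments -/

lemma mem_boxAt {ℓ : ℝ} {c p : ℝ × ℝ} :
    p ∈ boxAt ℓ c ↔ |p.1 - c.1| ≤ ℓ / 2 ∧ |p.2 - c.2| ≤ ℓ / 2 := Iff.rfl

lemma boxAt_mono {ℓ ℓ' : ℝ} (h : ℓ ≤ ℓ') (c : ℝ × ℝ) : boxAt ℓ c ⊆ boxAt ℓ' c := by
  rintro p ⟨h1, h2⟩
  exact ⟨h1.trans (by linarith), h2.trans (by linarith)⟩

lemma seg_param {p q z : ℝ × ℝ} (h : z ∈ segment ℝ p q) :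
    ∃ t : ℝ, 0 ≤ t ∧ t ≤ 1 ∧ z.1 = (1 - t) * p.1 + t * q.1 ∧
      z.2 = (1 - t) * p.2 + t * q.2 := by
  obtain ⟨a, b, ha, hb, hab, hz⟩ := h
  refine ⟨b, hb, by linarith, ?_, ?_⟩
  · have := congrArg Prod.fst hz
    simp only [Prod.fst_add, Prod.smul_fst, smul_eq_mul] at this
    rw [← this]; ring_nf; rw [show a = 1 - b by linarith]; ring
  · have := congrArg Prod.snd hz
    simp only [Prod.snd_add, Prod.smul_snd, smul_eq_mul] at this
    rw [← this]; ring_nf; rw [show a = 1 - b by linarith]; ring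

lemma seg_subset_boxAt {ℓ : ℝ} {c p q : ℝ × ℝ} (hp : p ∈ boxAt ℓ c)
    (hq : q ∈ boxAt ℓ c) : segment ℝ p q ⊆ boxAt ℓ c := by
  intro z hz
  obtain ⟨t, ht0, ht1, h1, h2⟩ := seg_param hz
  obtain ⟨hp1, hp2⟩ := hp
  obtain ⟨hq1, hq2⟩ := hq
  constructor
  · rw [h1, show (1-t)*p.1 + t*q.1 - c.1 = (1-t)*(p.1-c.1) + t*(q.1-c.1) by ring]
    calc |(1-t)*(p.1-c.1) + t*(q.1-c.1)| ≤ |(1-t)*(p.1-c.1)| + |t*(q.1-c.1)| :=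
          abs_add_le _ _
      _ = (1-t)*|p.1-c.1| + t*|q.1-c.1| := by
          rw [abs_mul, abs_mul, _root_.abs_of_nonneg (by linarith : (0:ℝ) ≤ 1 - t),
            _root_.abs_of_nonneg ht0]
      _ ≤ (1-t)*(ℓ/2) + t*(ℓ/2) := by
          apply add_le_add
          · exact mul_le_mul_of_nonneg_left hp1 (by linarith)
          · exact mul_le_mul_of_nonneg_left hq1 ht0
      _ = ℓ/2 := by ring
  · rw [h2, show (1-t)*p.2 + t*q.2 - c.2 = (1-t)*(p.2-c.2) + t*(q.2-c.2) by ring]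
    calc |(1-t)*(p.2-c.2) + t*(q.2-c.2)| ≤ |(1-t)*(p.2-c.2)| + |t*(q.2-c.2)| :=
          abs_add_le _ _
      _ = (1-t)*|p.2-c.2| + t*|q.2-c.2| := by
          rw [abs_mul, abs_mul, _root_.abs_of_nonneg (by linarith : (0:ℝ) ≤ 1 - t),
            _root_.abs_of_nonneg ht0]
      _ ≤ (1-t)*(ℓ/2) + t*(ℓ/2) := by
          apply add_le_add
          · exact mul_le_mul_of_nonneg_left hp2 (by linarith)
          · exact mul_le_mul_of_nonneg_left hq2 ht0
      _ = ℓ/2 := by ring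

end Geom
section More

variable {V : Type} [Fintype V] [DecidableEq V] {T : OTree V}

open OTree

lemma preLT_push {p1 p2 w1 w2 : V} (h : preLT T p1 p2)
    (hd : depthT T p1 = depthT T p2) (h1 : T.AncEq p1 w1) (h2 : T.AncEq p2 w2) :
    preLT T w1 w2 := by
  rcases h with ⟨hne, hanc⟩ | ⟨a, b, ha, hb, hp, hr, haw, hbw⟩
  · exact absurd hd (Nat.ne_of_lt (hanc.depth_lt hne))
  · exact preLT_fork ha hb hp hr (haw.trans h1) (hbw.trans h2)

lemma visited_of_anc {visited : V → Prop}
    (hclosed : ∀ v c, visited v → T.IsChild c v → visited c)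
    {x w : V} (hanc : T.AncEq x w) (hx : visited x) : visited w := by
  obtain ⟨n, hn⟩ := hanc
  induction n generalizing w with
  | zero => simp only [Function.iterate_zero, id] at hn; exact hn ▸ hx
  | succ n ih =>
    by_cases hw : w = T.root
    · subst hw
      have : T.parent^[n] T.root = x := by
        rw [← hn, Function.iterate_succ_apply, T.parent_root]
      exact ih this
    · have hp : T.parent^[n] (T.parent w) = x := by
        rw [← Function.iterate_succ_apply]; exact hn
      have hpw : visited (T.parent w) := ih hp
      exact hclosed (T.parent w) w hpw ⟨hw, rfl⟩

/-- every strict descendant of `vi` is visited when all children of `vi` are. -/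
lemma visited_strict_desc {visited : V → Prop}
    (hclosed : ∀ v c, visited v → T.IsChild c v → visited c)
    {vi : V} (hvi₃ : ∀ c, T.IsChild c vi → visited c)
    {w : V} (hw : T.AncEq vi w) (hne : w ≠ vi) : visited w := by
  classical
  have hex : ∃ n, T.parent^[n] w = vi := hw
  have hn0 : Nat.find hex ≠ 0 := by
    intro h
    have := Nat.find_spec hex
    rw [h] at this
    exact hne this
  obtain ⟨k, hk⟩ := Nat.exists_eq_succ_of_ne_zero hn0
  set c := T.parent^[k] w with hc
  have hcvi : T.parent c = vi := by
    rw [hc]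
    have h1 : T.parent^[k+1] w = vi := by
      have := Nat.find_spec hex
      rwa [hk] at this
    rw [← h1]
    exact (Function.iterate_succ_apply' T.parent k w).symm
  have hcne : c ≠ vi := by
    intro h
    have : Nat.find hex ≤ k := Nat.find_le (hc ▸ h)
    omega
  have hcroot : c ≠ T.root := by
    intro h
    exact hcne (by rw [h, ← T.parent_root, ← h, hcvi])
  exact visited_of_anc hclosed ⟨k, rfl⟩ (hvi₃ c ⟨hcroot, hcvi⟩)

lemma not_anc_parent {vi : V} (hvi : vi ≠ T.root) : ¬ T.AncEq vi (T.parent vi) := by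
  intro h
  exact parent_ne_self hvi (h.antisymm OTree.ancEq_parent).symm

end More

section MoreGeom

open Real

lemma arcsin_term_lt_target {d D : ℝ} (hd : 1 ≤ d) (hD : d ≤ D) :
    Real.arcsin (-(1 / Real.sqrt (d ^ 2 + 1))) <
      Real.arcsin (-(1 / Real.sqrt (D ^ 2 + 2))) := by
  have h1 : (1:ℝ) ≤ Real.sqrt (d ^ 2 + 1) := by
    have := Real.sqrt_le_sqrt (show (1:ℝ) ≤ d^2+1 by nlinarith)
    rwa [Real.sqrt_one] at this
  have h2 : Real.sqrt (d ^ 2 + 1) < Real.sqrt (D ^ 2 + 2) :=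
    Real.sqrt_lt_sqrt (by positivity) (by nlinarith)
  have h3 : -(1 / Real.sqrt (D ^ 2 + 2)) ∈ Set.Icc (-1:ℝ) 1 := by
    constructor
    · have : 1 / Real.sqrt (D ^ 2 + 2) ≤ 1 := by
        rw [div_le_one (by linarith)]; linarith
      linarith
    · have : 0 < 1 / Real.sqrt (D ^ 2 + 2) := by positivity
      linarith
  apply Real.strictMonoOn_arcsin (arcsin_term_mem hd) h3
  have := one_div_lt_one_div_of_lt (by linarith : (0:ℝ) < Real.sqrt (d^2+1)) h2
  linarith

lemma arcsin_target_neg {D : ℝ} (hD : 0 ≤ D) :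
    Real.arcsin (-(1 / Real.sqrt (D ^ 2 + 2))) < 0 := by
  rw [Real.arcsin_neg]
  have : 0 < Real.arcsin (1 / Real.sqrt (D ^ 2 + 2)) := by
    rw [Real.arcsin_pos]; positivity
  linarith

lemma arcsin_target_gt {D : ℝ} (hD : 0 ≤ D) :
    -(π/2) < Real.arcsin (-(1 / Real.sqrt (D ^ 2 + 2))) := by
  rw [Real.neg_pi_div_two_lt_arcsin]
  have h1 : (1:ℝ) < Real.sqrt (D ^ 2 + 2) := by
    have := Real.sqrt_lt_sqrt (by norm_num : (0:ℝ) ≤ 1) (show (1:ℝ) < D^2+2 by nlinarith)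
    rwa [Real.sqrt_one] at this
  have : 1 / Real.sqrt (D ^ 2 + 2) < 1 := by
    rw [div_lt_one (by linarith)]; linarith
  linarith

lemma rot2 (p : ℝ × ℝ) : rotCCW (rotCCW p) = (-p.1, -p.2) := by
  simp [rotCCW]

end MoreGeom
section Geom2

open Real Complex

lemma dirAngle_down_right {p q : ℝ × ℝ} (h1 : 1 ≤ q.1 - p.1) (h2 : q.2 - p.2 = -1) :
    dirAngle p q = Real.arcsin (-(1 / Real.sqrt ((q.1 - p.1) ^ 2 + 1))) := by
  unfold dirAngle
  rw [arg_down_right (by rw [dir_re]; exact h1) (by rw [dir_im]; exact h2), dir_re]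

lemma dirAngle_up_left {p q : ℝ × ℝ} (h1 : q.1 - p.1 ≤ -1) (h2 : q.2 - p.2 = 1) :
    dirAngle p q = Real.arcsin (-(1 / Real.sqrt ((q.1 - p.1) ^ 2 + 1))) + π := by
  unfold dirAngle
  rw [arg_up_left (by rw [dir_re]; exact h1) (by rw [dir_im]; exact h2), dir_re]

lemma dirAngle_nonneg {p q : ℝ × ℝ} (h : 0 ≤ q.2 - p.2) : 0 ≤ dirAngle p q :=
  Complex.arg_nonneg_iff.mpr (by rw [dir_im]; exact h)

lemma dirAngle_le_pi (p q : ℝ × ℝ) : dirAngle p q ≤ π := Complex.arg_le_pi _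

lemma dirAngle_neg {p q : ℝ × ℝ} (h : q.2 - p.2 < 0) : dirAngle p q < 0 :=
  Complex.arg_neg_iff.mpr (by rw [dir_im]; exact h)

lemma dirAngle_gt_neg_pi (p q : ℝ × ℝ) : -π < dirAngle p q := Complex.neg_pi_lt_arg _

end Geom2

set_option maxHeartbeats 1600000 in
/-- **Lemma 7.** Let `Δprev` be a partially-canonical drawing of
`T[i-1]` (labeling `visited`), let `vi` be the `i`-th internal node labeled visited in
the bottom-up visit of `T` (an unvisited internal node all of whose children are
visited), and let `Δi` be obtained from `Δprev` by redrawing the subtree `T_{vi}` —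
keeping `vi` and every node outside `T_{vi}` fixed — upward canonically if `vi` is the
root or does not lie above its parent, and downward canonically otherwise. Then `Δi`
is a partially-canonical drawing of `T[i]` (labeling `visited ∪ {vi}`). -/
theorem redraw_subtree_partially_canonical (T : OTree V) (Γ₀ : V → ℝ × ℝ) (ℓ₀ : ℝ)
    (hℓ₀ : ℓ₀ = 150 * (max (gW Γ₀) (gH Γ₀)) ^ 2 * (Fintype.card V : ℝ))
    (visited : V → Prop)
    (hleaf : ∀ v, T.IsLeaf v → visited v)
    (hclosed : ∀ v c, visited v → T.IsChild c v → visited c)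
    (vi : V) (hvi₁ : ¬ T.IsLeaf vi) (hvi₂ : ¬ visited vi)
    (hvi₃ : ∀ c, T.IsChild c vi → visited c)
    (Δprev Δi : V → ℝ × ℝ)
    (hprev : PartiallyCanonical T visited ℓ₀ Δprev)
    (hfix : ∀ w, (w = vi ∨ ¬ T.AncEq vi w) → Δi w = Δprev w)
    (hupc : (vi = T.root ∨ (Δprev vi).2 ≤ (Δprev (T.parent vi)).2) →
      UpCanonicalOn T vi Δi)
    (hdownc : (vi ≠ T.root ∧ (Δprev (T.parent vi)).2 < (Δprev vi).2) →
      DownCanonicalOn T vi Δi) :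
    PartiallyCanonical T (fun w => visited w ∨ w = vi) ℓ₀ Δi := by
  classical
  obtain ⟨hOP, ⟨hPinj, hPseg⟩, hGR, hA, ⟨S, hSb, hSdisj, hSbox⟩, hC, hD⟩ := hprev
  have hl0 : (0:ℝ) ≤ ℓ₀ := by rw [hℓ₀]; positivity
  have : Nonempty V := ⟨vi⟩
  have hNpos : 0 < Fintype.card V := Fintype.card_pos
  set N : ℝ := (Fintype.card V : ℝ) with hNdef
  have hN1 : (1:ℝ) ≤ N := by rw [hNdef]; exact_mod_cast hNpos
  set C : ℝ × ℝ := Δprev vi with hCdef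
  have hfixvi : Δi vi = C := hfix vi (Or.inl rfl)
  -- every strict descendant of vi is visited, and vi is not a descendant of
  -- any visited node
  have hvis : ∀ w, T.AncEq vi w → w ≠ vi → visited w := fun w hw hne =>
    visited_strict_desc hclosed hvi₃ hw hne
  have hnotdesc : ∀ u, visited u → ¬ T.AncEq u vi := fun u hu hanc =>
    hvi₂ (visited_of_anc hclosed hanc hu)
  -- the parent of vi is not in the subtree of vi and is unvisited
  have hparnot : vi ≠ T.root → ¬ T.AncEq vi (T.parent vi) := fun h => not_anc_parent h
  have hparunvis : vi ≠ T.root → ¬ visited (T.parent vi) := by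
    intro h hv
    exact hvi₂ (hclosed _ _ hv ⟨h, rfl⟩)
  -- membership of parents in the subtree
  have hparmem : ∀ w, T.AncEq vi w → w ≠ vi → T.AncEq vi (T.parent w) :=
    fun w hw hne => hw.parent_right (Ne.symm hne)
  have hwroot : ∀ w, T.AncEq vi w → w ≠ vi → w ≠ T.root :=
    fun w hw hne => ne_root_of_strict_desc hw hne
  -- nodes outside the subtree have fixed parents
  have hfixpar : ∀ w, ¬ T.AncEq vi w → ¬ T.AncEq vi (T.parent w) := by
    intro w hw hp
    exact hw (hp.trans OTree.ancEq_parent)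
  -- the canonical formula for the new drawing
  obtain ⟨ε, hε, hform, hpary, hcanon⟩ :
      ∃ ε : ℝ, (ε = 1 ∨ ε = -1) ∧
        (∀ w, T.AncEq vi w →
          Δi w = (C.1 + ε * (relIdx T vi w : ℝ),
                  C.2 - ε * ((depthT T w : ℝ) - (depthT T vi : ℝ)))) ∧
        (vi ≠ T.root →
          (ε = 1 → C.2 ≤ (Δprev (T.parent vi)).2) ∧
          (ε = -1 → (Δprev (T.parent vi)).2 < C.2)) ∧
        ((UpCanonicalOn T vi Δi ∧ ε = 1) ∨ (DownCanonicalOn T vi Δi ∧ ε = -1)) := by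
    by_cases hcase : vi = T.root ∨ (Δprev vi).2 ≤ (Δprev (T.parent vi)).2
    · obtain ⟨x₀, y₀, h⟩ := hupc hcase
      have h0 := h vi (OTree.AncEq.refl T vi)
      rw [relIdx_self] at h0
      simp at h0
      refine ⟨1, Or.inl rfl, ?_, ?_, Or.inl ⟨⟨x₀, y₀, h⟩, rfl⟩⟩
      · intro w hw
        rw [h w hw]
        have h1 : C.1 = (x₀ : ℝ) := by rw [← hfixvi, h0]
        have h2 : C.2 = (y₀ : ℝ) := by rw [← hfixvi, h0]
        rw [h1, h2]
        simp only [Prod.mk.injEq]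
        constructor <;> (try dsimp only) <;> (push_cast; ring)
      · intro hroot
        refine ⟨fun _ => ?_, fun hne => absurd hne (by norm_num)⟩
        rcases hcase with h | h
        · exact absurd h hroot
        · exact h
    · push_neg at hcase
      obtain ⟨hroot, hlt⟩ := hcase
      obtain ⟨Γ', ⟨x₀, y₀, h⟩, hrot⟩ := hdownc ⟨hroot, hlt⟩
      have hdown : ∀ w, T.AncEq vi w →
          Δi w = (-(Γ' w).1, -(Γ' w).2) := by
        intro w hw
        rw [hrot w hw, rot2]
      have h0 := h vi (OTree.AncEq.refl T vi)
      rw [relIdx_self] at h0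
      simp at h0
      have hvi0 : Δi vi = (-(x₀:ℝ), -(y₀:ℝ)) := by
        rw [hdown vi (OTree.AncEq.refl T vi), h0]
      refine ⟨-1, Or.inr rfl, ?_, ?_, Or.inr ⟨⟨Γ', ⟨x₀, y₀, h⟩, hrot⟩, rfl⟩⟩
      · intro w hw
        rw [hdown w hw, h w hw]
        have h1 : C.1 = -(x₀ : ℝ) := by rw [← hfixvi, hvi0]
        have h2 : C.2 = -(y₀ : ℝ) := by rw [← hfixvi, hvi0]
        rw [h1, h2]
        simp only [Prod.mk.injEq]
        constructor <;> (try dsimp only) <;> (push_cast; ring)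
      · intro _
        exact ⟨fun h1 => absurd h1 (by norm_num), fun _ => hlt⟩
  have hεabs : |ε| = 1 := by rcases hε with h | h <;> rw [h] <;> norm_num
  have hεne : ε ≠ 0 := by rcases hε with h | h <;> rw [h] <;> norm_num
  -- depth differences
  have hdep : ∀ w, T.AncEq vi w → (0:ℝ) ≤ (depthT T w : ℝ) - (depthT T vi : ℝ) := by
    intro w hw
    have h1 := hw.depth_le
    have : (depthT T vi : ℝ) ≤ (depthT T w : ℝ) := by exact_mod_cast h1
    linarith
  have hdep1 : ∀ w, T.AncEq vi w → w ≠ vi →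
      (1:ℝ) ≤ (depthT T w : ℝ) - (depthT T vi : ℝ) := by
    intro w hw hne
    have h1 : depthT T vi + 1 ≤ depthT T w := hw.depth_lt (Ne.symm hne)
    have : (depthT T vi : ℝ) + 1 ≤ (depthT T w : ℝ) := by exact_mod_cast h1
    linarith
  have hdepN : ∀ w, (depthT T w : ℝ) ≤ N - 1 := by
    intro w
    have h1 : depthT T w + 1 ≤ Fintype.card V := OTree.depthT_lt_card T w
    have : (depthT T w : ℝ) + 1 ≤ N := by rw [hNdef]; exact_mod_cast h1
    linarith
  have hidxN : ∀ w, (relIdx T vi w : ℝ) ≤ N - 1 := by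
    intro w
    have h1 : relIdx T vi w + 1 ≤ Fintype.card V := relIdx_lt_card T vi w
    have : (relIdx T vi w : ℝ) + 1 ≤ N := by rw [hNdef]; exact_mod_cast h1
    linarith
  -- all moved nodes land in the 2N-box around C
  have hinbox : ∀ w, T.AncEq vi w → Δi w ∈ boxAt (2 * N) C := by
    intro w hw
    rw [hform w hw]
    constructor
    · simp only
      rw [add_sub_cancel_left, abs_mul, hεabs, one_mul, Nat.abs_cast]
      have := hidxN w
      linarith
    · simp only
      rw [sub_sub_cancel_left, abs_neg, abs_mul, hεabs, one_mul,
        abs_of_nonneg (hdep w hw)]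
      have h1 := hdepN w
      have h2 : (0:ℝ) ≤ (depthT T vi : ℝ) := by positivity
      linarith
  have hboxsub : boxAt (2 * N) C ⊆ boxAt (ℓ₀ + 4 * N) C :=
    boxAt_mono (by linarith) C
  -- moved segments stay in the 2N-box
  have hseginbox : ∀ w, T.AncEq vi w → w ≠ vi →
      segment ℝ (Δi w) (Δi (T.parent w)) ⊆ boxAt (2 * N) C := by
    intro w hw hne
    exact seg_subset_boxAt (hinbox w hw) (hinbox _ (hparmem w hw hne))
  -- fixedness of edges outside the subtree
  have hfixboth : ∀ w, (w = vi ∨ ¬ T.AncEq vi w) →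
      Δi w = Δprev w ∧ Δi (T.parent w) = Δprev (T.parent w) := by
    intro w hw
    refine ⟨hfix w hw, ?_⟩
    rcases hw with rfl | hw
    · by_cases hroot : w = T.root
      · rw [hroot, T.parent_root]
        exact hfix _ (Or.inl hroot.symm)
      · exact hfix _ (Or.inr (hparnot hroot))
    · exact hfix _ (Or.inr (fun h => hw (h.trans OTree.ancEq_parent)))
  -- old condition (d) at vi
  have hDvi := hD vi hvi₂
  -- positions are unchanged on old nodes; the old drawing around other
  -- unvisited vertices is untouched
  have hfixunvis : ∀ v, ¬ visited v → v ≠ vi → Δi v = Δprev v := by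
    intro v hv hne
    refine hfix v (Or.inr ?_)
    intro hanc
    exact hv (hvis v hanc hne)
  -- injectivity of the new drawing
  have hInj : Function.Injective Δi := by
    intro x y hxy
    by_cases hx : T.AncEq vi x <;> by_cases hy : T.AncEq vi y
    · by_contra hne
      rw [hform x hx, hform y hy] at hxy
      have hfst := congrArg Prod.fst hxy
      dsimp only at hfst
      have hι : (relIdx T vi x : ℝ) = relIdx T vi y :=
        mul_left_cancel₀ hεne (by linarith)
      have : relIdx T vi x = relIdx T vi y := by exact_mod_cast hι
      exact relIdx_ne hx hy hne this
    · exfalso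
      have hyne : y ≠ vi := fun h => hy (h ▸ OTree.AncEq.refl T vi)
      have hbox : Δi y ∈ boxAt (ℓ₀ + 4 * N) C := hxy ▸ hboxsub (hinbox x hx)
      rw [hfix y (Or.inr hy)] at hbox
      exact hDvi.1 y hyne hbox
    · exfalso
      have hxne : x ≠ vi := fun h => hx (h ▸ OTree.AncEq.refl T vi)
      have hbox : Δi x ∈ boxAt (ℓ₀ + 4 * N) C := hxy ▸ hboxsub (hinbox y hy)
      rw [hfix x (Or.inr hx)] at hbox
      exact hDvi.1 x hxne hbox
    · rw [hfix x (Or.inr hx), hfix y (Or.inr hy)] at hxy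
      exact hPinj hxy
  -- parametrization of points on moved edges
  have hK0 : ∀ w, T.AncEq vi w → w ≠ vi →
      ∀ z ∈ segment ℝ (Δi w) (Δi (T.parent w)),
      ∃ t : ℝ, 0 ≤ t ∧ t ≤ 1 ∧
        z.1 = C.1 + ε * ((1-t) * (relIdx T vi w : ℝ) +
          t * (relIdx T vi (T.parent w) : ℝ)) ∧
        z.2 = C.2 - ε * ((depthT T w : ℝ) - (depthT T vi : ℝ) - t) := by
    intro w hw hne z hz
    obtain ⟨t, ht0, ht1, h1, h2⟩ := seg_param hz
    have hp := hparmem w hw hne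
    have hdp : (depthT T (T.parent w) : ℝ) = (depthT T w : ℝ) - 1 := by
      have hh := OTree.depthT_parent (hwroot w hw hne)
      have : (depthT T w : ℝ) = (depthT T (T.parent w) : ℝ) + 1 := by exact_mod_cast hh
      linarith
    refine ⟨t, ht0, ht1, ?_, ?_⟩
    · rw [h1, hform w hw, hform _ hp]; dsimp only; ring
    · rw [h2, hform w hw, hform _ hp]; dsimp only; rw [hdp]; ring
  -- the value of a moved node, in convenient form
  have hz_of_t : ∀ w (hw : T.AncEq vi w) (z : ℝ × ℝ),
      z.1 = C.1 + ε * (relIdx T vi w : ℝ) →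
      z.2 = C.2 - ε * ((depthT T w : ℝ) - (depthT T vi : ℝ)) → z = Δi w := by
    intro w hw z h1 h2
    rw [hform w hw]
    exact Prod.ext h1 h2
  -- planarity: moved edge vs moved edge
  have hK1 : ∀ u v, T.AncEq vi u → u ≠ vi → T.AncEq vi v → v ≠ vi → u ≠ v →
      segment ℝ (Δi u) (Δi (T.parent u)) ∩ segment ℝ (Δi v) (Δi (T.parent v)) ⊆
        Δi '' (({u, T.parent u} : Set V) ∩ {v, T.parent v}) := by
    intro u v hu hune hv hvne huv z hz
    obtain ⟨hz1, hz2⟩ := hz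
    obtain ⟨t, ht0, ht1, hx1, hy1⟩ := hK0 u hu hune z hz1
    obtain ⟨s, hs0, hs1, hx2, hy2⟩ := hK0 v hv hvne z hz2
    have hyy : (depthT T u:ℝ) - (depthT T vi:ℝ) - t
        = (depthT T v:ℝ) - (depthT T vi:ℝ) - s :=
      mul_left_cancel₀ hεne (by linarith)
    have hxx : (1-t) * (relIdx T vi u : ℝ) + t * (relIdx T vi (T.parent u) : ℝ)
        = (1-s) * (relIdx T vi v : ℝ) + s * (relIdx T vi (T.parent v) : ℝ) :=
      mul_left_cancel₀ hεne (by linarith)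
    rcases Nat.lt_trichotomy (depthT T u) (depthT T v) with hlt | heq | hgt
    · -- u is one level above v: z is the point Δi u = Δi (parent v)
      have hle : depthT T v ≤ depthT T u + 1 := by
        by_contra hgt2
        push_neg at hgt2
        have : (depthT T u:ℝ) + 2 ≤ (depthT T v:ℝ) := by exact_mod_cast hgt2
        linarith
      have hdveq : depthT T v = depthT T u + 1 := by omega
      have hdc : (depthT T v:ℝ) = (depthT T u:ℝ) + 1 := by exact_mod_cast hdveq
      have ht' : t = 0 := by linarith
      have hs' : s = 1 := by linarith
      subst ht' hs'
      have hzu : z = Δi u := hz_of_t u hu z (by rw [hx1]; ring) (by rw [hy1]; ring)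
      have hzpv : z = Δi (T.parent v) := by
        refine hz_of_t _ (hparmem v hv hvne) z (by rw [hx2]; ring) ?_
        rw [hy2]
        have hdp : (depthT T (T.parent v) : ℝ) = (depthT T v : ℝ) - 1 := by
          have hh := OTree.depthT_parent (hwroot v hv hvne)
          have : (depthT T v : ℝ) = (depthT T (T.parent v) : ℝ) + 1 := by
            exact_mod_cast hh
          linarith
        rw [hdp]; ring
      have hupv : u = T.parent v := hInj (hzu.symm.trans hzpv)
      exact ⟨u, ⟨Or.inl rfl, Or.inr (by exact hupv ▸ rfl)⟩, hzu.symm⟩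
    · -- equal depth
      have hts : t = s := by
        have : (depthT T u:ℝ) = (depthT T v:ℝ) := by exact_mod_cast heq
        linarith
      subst hts
      by_cases hpp : T.parent u = T.parent v
      · -- same parent: intersection only at the parent
        have hane : (relIdx T vi u : ℝ) ≠ (relIdx T vi v : ℝ) := by
          have := relIdx_ne hu hv huv
          exact_mod_cast this
        have ht' : t = 1 := by
          rcases mul_eq_zero.mp (show (1-t) * ((relIdx T vi u : ℝ)
              - (relIdx T vi v : ℝ)) = 0 by rw [hpp] at hxx; linarith) with h | h
          · linarith
          · exact absurd (by linarith : (relIdx T vi u : ℝ) = relIdx T vi v) hane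
        subst ht'
        have hzpu : z = Δi (T.parent u) := by
          refine hz_of_t _ (hparmem u hu hune) z (by rw [hx1]; ring) ?_
          rw [hy1]
          have hdp : (depthT T (T.parent u) : ℝ) = (depthT T u : ℝ) - 1 := by
            have hh := OTree.depthT_parent (hwroot u hu hune)
            have : (depthT T u : ℝ) = (depthT T (T.parent u) : ℝ) + 1 := by
              exact_mod_cast hh
            linarith
          rw [hdp]; ring
        exact ⟨T.parent u, ⟨Or.inr rfl, Or.inr (by rw [hpp]; exact rfl)⟩, hzpu.symm⟩
      · -- distinct parents at the same depth: no intersection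
        exfalso
        have hpu := hparmem u hu hune
        have hpv := hparmem v hv hvne
        have hdpu : depthT T (T.parent u) = depthT T (T.parent v) := by
          have h1 := OTree.depthT_parent (hwroot u hu hune)
          have h2 := OTree.depthT_parent (hwroot v hv hvne)
          omega
        have haux : ∀ p q : V, T.AncEq vi p → T.AncEq vi q → preLT T p q →
            (relIdx T vi p : ℝ) < relIdx T vi q := by
          intro p q hp hq hlt
          have := relIdx_lt_relIdx hp hlt
          exact_mod_cast this
        rcases preLT_trichotomy hpp with hord | hord
        · have h1 : (relIdx T vi (T.parent u) : ℝ) < relIdx T vi (T.parent v) :=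
            haux _ _ hpu hpv hord
          have h2 : (relIdx T vi u : ℝ) < relIdx T vi v :=
            haux _ _ hu hv (preLT_push hord hdpu OTree.ancEq_parent OTree.ancEq_parent)
          nlinarith [mul_nonneg (by linarith : (0:ℝ) ≤ 1 - t)
              (by linarith : (0:ℝ) ≤ (relIdx T vi v : ℝ) - relIdx T vi u),
            mul_nonneg ht0 (by linarith : (0:ℝ) ≤ (relIdx T vi (T.parent v) : ℝ)
              - relIdx T vi (T.parent u))]
        · have h1 : (relIdx T vi (T.parent v) : ℝ) < relIdx T vi (T.parent u) :=
            haux _ _ hpv hpu hord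
          have h2 : (relIdx T vi v : ℝ) < relIdx T vi u :=
            haux _ _ hv hu (preLT_push hord hdpu.symm OTree.ancEq_parent
              OTree.ancEq_parent)
          nlinarith [mul_nonneg (by linarith : (0:ℝ) ≤ 1 - t)
              (by linarith : (0:ℝ) ≤ (relIdx T vi u : ℝ) - relIdx T vi v),
            mul_nonneg ht0 (by linarith : (0:ℝ) ≤ (relIdx T vi (T.parent u) : ℝ)
              - relIdx T vi (T.parent v))]
    · -- v is one level above u
      have hle : depthT T u ≤ depthT T v + 1 := by
        by_contra hgt2
        push_neg at hgt2
        have : (depthT T v:ℝ) + 2 ≤ (depthT T u:ℝ) := by exact_mod_cast hgt2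
        linarith
      have hdveq : depthT T u = depthT T v + 1 := by omega
      have hdc : (depthT T u:ℝ) = (depthT T v:ℝ) + 1 := by exact_mod_cast hdveq
      have ht' : t = 1 := by linarith
      have hs' : s = 0 := by linarith
      subst ht' hs'
      have hzv : z = Δi v := hz_of_t v hv z (by rw [hx2]; ring) (by rw [hy2]; ring)
      have hzpu : z = Δi (T.parent u) := by
        refine hz_of_t _ (hparmem u hu hune) z (by rw [hx1]; ring) ?_
        rw [hy1]
        have hdp : (depthT T (T.parent u) : ℝ) = (depthT T u : ℝ) - 1 := by
          have hh := OTree.depthT_parent (hwroot u hu hune)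
          have : (depthT T u : ℝ) = (depthT T (T.parent u) : ℝ) + 1 := by
            exact_mod_cast hh
          linarith
        rw [hdp]; ring
      have hvpu : v = T.parent u := hInj (hzv.symm.trans hzpu)
      exact ⟨v, ⟨Or.inr (by exact hvpu ▸ rfl), Or.inl rfl⟩, hzv.symm⟩
  -- planarity: the edge from vi to its parent vs a moved edge
  have hK2 : ∀ v, T.AncEq vi v → v ≠ vi → vi ≠ T.root →
      segment ℝ (Δi vi) (Δi (T.parent vi)) ∩
        segment ℝ (Δi v) (Δi (T.parent v)) ⊆
        Δi '' (({vi, T.parent vi} : Set V) ∩ {v, T.parent v}) := by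
    intro v hv hvne hviroot z hz
    obtain ⟨hz1, hz2⟩ := hz
    obtain ⟨t, ht0, ht1, _, hz1y⟩ := seg_param hz1
    rw [hfixvi, (hfixboth vi (Or.inl rfl)).2] at hz1y
    obtain ⟨s, hs0, hs1, hz2x, hz2y⟩ := hK0 v hv hvne z hz2
    have hd1 := hdep1 v hv hvne
    have hkey : (depthT T v:ℝ) - (depthT T vi:ℝ) - s = 0 := by
      rcases hε with hε1 | hε1
      · have hP := (hpary hviroot).1 hε1
        rw [hε1] at hz2y
        nlinarith
      · have hP := (hpary hviroot).2 hε1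
        rw [hε1] at hz2y
        nlinarith
    have hs' : s = 1 := by linarith
    have hdv : (depthT T v:ℝ) = (depthT T vi:ℝ) + 1 := by linarith
    have hdint : depthT T v = depthT T vi + 1 := by exact_mod_cast hdv
    have hpv : T.parent v = vi := by
      have hmem := hparmem v hv hvne
      have hdp := OTree.depthT_parent (hwroot v hv hvne)
      exact (hmem.eq_of_depth_eq (by omega)).symm
    subst hs'
    have hzpv : z = Δi (T.parent v) := by
      refine hz_of_t _ (hparmem v hv hvne) z (by rw [hz2x]; ring) ?_
      rw [hz2y, hpv, hdv]
      ring
    exact ⟨T.parent v, ⟨Or.inl hpv, Or.inr rfl⟩, hzpv.symm⟩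
  -- planarity of the new drawing
  have hPlanNew : ∀ u v : V, u ≠ T.root → v ≠ T.root → u ≠ v →
      segment ℝ (Δi u) (Δi (T.parent u)) ∩ segment ℝ (Δi v) (Δi (T.parent v)) ⊆
        Δi '' (({u, T.parent u} : Set V) ∩ {v, T.parent v}) := by
    have hmixed : ∀ u v : V, u ≠ T.root → v ≠ T.root →
        T.AncEq vi u → u ≠ vi → ¬ (T.AncEq vi v ∧ v ≠ vi) →
        segment ℝ (Δi u) (Δi (T.parent u)) ∩
          segment ℝ (Δi v) (Δi (T.parent v)) ⊆
          Δi '' (({u, T.parent u} : Set V) ∩ {v, T.parent v}) := by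
      intro u v hu hv hmu hmune hmv z hz
      rw [not_and_or, not_not] at hmv
      rcases hmv with hmv | hmv
      · -- v is a fixed edge completely outside the subtree: contradiction
        exfalso
        have hvne : v ≠ vi := fun h => hmv (h ▸ OTree.AncEq.refl T vi)
        obtain ⟨hf1, hf2⟩ := hfixboth v (Or.inr hmv)
        have hzbig : z ∈ boxAt (ℓ₀ + 4 * N) C :=
          hboxsub (hseginbox u hmu hmune hz.1)
        have hzseg : z ∈ segment ℝ (Δprev v) (Δprev (T.parent v)) := by
          rw [← hf1, ← hf2]; exact hz.2
        rcases hDvi.2 v hv ⟨z, hzseg, hzbig⟩ with h | h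
        · exact hmv ⟨1, h⟩
        · exact hvne h
      · -- v = vi : the parent edge of vi
        subst hmv
        have hres := hK2 u hmu hmune hv ⟨hz.2, hz.1⟩
        rwa [Set.inter_comm] at hres
    intro u v hu hv huv z hz
    by_cases hmu : T.AncEq vi u ∧ u ≠ vi <;>
      by_cases hmv : T.AncEq vi v ∧ v ≠ vi
    · exact hK1 u v hmu.1 hmu.2 hmv.1 hmv.2 huv hz
    · exact hmixed u v hu hv hmu.1 hmu.2 hmv hz
    · have hres := hmixed v u hv hu hmv.1 hmv.2 hmu ⟨hz.2, hz.1⟩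
      rwa [Set.inter_comm] at hres
    · -- both fixed
      rw [not_and_or, not_not] at hmu hmv
      have hfu := hfixboth u (Or.symm hmu)
      have hfv := hfixboth v (Or.symm hmv)
      have hz' : z ∈ segment ℝ (Δprev u) (Δprev (T.parent u)) ∩
          segment ℝ (Δprev v) (Δprev (T.parent v)) := by
        rw [← hfu.1, ← hfu.2, ← hfv.1, ← hfv.2]; exact hz
      obtain ⟨x, hxmem, hxz⟩ := hPseg u v hu hv huv hz'
      refine ⟨x, hxmem, ?_⟩
      rcases hxmem.1 with hx | hx
      · rw [hx] at hxz ⊢; rw [hfu.1]; exact hxz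
      · rw [hx] at hxz ⊢; rw [hfu.2]; exact hxz
  -- grid coordinates of C
  obtain ⟨⟨cx, hcx⟩, ⟨cy, hcy⟩⟩ := hGR vi
  have hcx' : C.1 = (cx:ℝ) := hcx
  have hcy' : C.2 = (cy:ℝ) := hcy
  -- canonical drawings of subtrees of moved nodes
  have hsubcan : ∀ u, T.AncEq vi u →
      (ε = 1 → UpCanonicalOn T u Δi) ∧ (ε = -1 → DownCanonicalOn T u Δi) := by
    intro u hanc
    constructor
    · intro hε1
      refine ⟨cx + relIdx T vi u, cy - (depthT T u : ℤ) + (depthT T vi : ℤ),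
        fun w hw => ?_⟩
      rw [hform w (hanc.trans hw), relIdx_add hanc hw, hε1]
      simp only [Prod.mk.injEq]
      constructor
      · rw [hcx']; push_cast; ring
      · rw [hcy']; push_cast; ring
    · intro hε1
      refine ⟨fun w => (-(Δi w).1, -(Δi w).2),
        ⟨-cx + relIdx T vi u, -cy + (depthT T vi : ℤ) - (depthT T u : ℤ),
          fun w hw => ?_⟩,
        fun w _ => by rw [rot2]; simp⟩
      show (-(Δi w).1, -(Δi w).2) = _
      rw [hform w (hanc.trans hw), relIdx_add hanc hw, hε1]
      simp only [Prod.mk.injEq]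
      constructor
      · rw [hcx']; push_cast; ring
      · rw [hcy']; push_cast; ring
  -- new condition (a)
  have hAnew : ∀ u, (visited u ∨ u = vi) →
      (UpCanonicalOn T u Δi ∨ DownCanonicalOn T u Δi) ∧
      (u ≠ T.root →
        ((Δi u).2 ≤ (Δi (T.parent u)).2 → UpCanonicalOn T u Δi) ∧
        ((Δi (T.parent u)).2 < (Δi u).2 → DownCanonicalOn T u Δi)) := by
    intro u hu
    by_cases huvi : u = vi
    · subst huvi
      have hsc := hsubcan u (OTree.AncEq.refl T u)
      constructor
      · rcases hcanon with ⟨h, _⟩ | ⟨h, _⟩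
        · exact Or.inl h
        · exact Or.inr h
      · intro hroot
        rw [hfixvi, (hfixboth u (Or.inl rfl)).2]
        constructor
        · intro hle
          rcases hcanon with ⟨h, _⟩ | ⟨_, hε1⟩
          · exact h
          · exact absurd hle (not_le.mpr ((hpary hroot).2 hε1))
        · intro hlt
          rcases hcanon with ⟨_, hε1⟩ | ⟨h, _⟩
          · exact absurd hlt (not_lt.mpr ((hpary hroot).1 hε1))
          · exact h
    · have huv : visited u := hu.resolve_right huvi
      by_cases hanc : T.AncEq vi u
      · -- u is a strict descendant of vi: canonical by construction
        have hsc := hsubcan u hanc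
        have hroot : u ≠ T.root := hwroot u hanc huvi
        have hpu := hparmem u hanc huvi
        have hyu : (Δi u).2 = C.2 - ε * ((depthT T u : ℝ) - (depthT T vi : ℝ)) := by
          rw [hform u hanc]
        have hypu : (Δi (T.parent u)).2
            = C.2 - ε * ((depthT T u : ℝ) - 1 - (depthT T vi : ℝ)) := by
          rw [hform _ hpu]
          have hh := OTree.depthT_parent hroot
          have : (depthT T (T.parent u) : ℝ) = (depthT T u : ℝ) - 1 := by
            have h2 : (depthT T u : ℝ) = (depthT T (T.parent u) : ℝ) + 1 := by
              exact_mod_cast hh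
            linarith
          rw [this]
        rcases hε with hε1 | hε1
        · refine ⟨Or.inl (hsc.1 hε1), fun _ => ⟨fun _ => hsc.1 hε1, fun hlt => ?_⟩⟩
          rw [hyu, hypu, hε1] at hlt
          exfalso; linarith
        · refine ⟨Or.inr (hsc.2 hε1), fun _ => ⟨fun hle => ?_, fun _ => hsc.2 hε1⟩⟩
          rw [hyu, hypu, hε1] at hle
          exfalso; linarith
      · -- u is outside the subtree of vi: nothing moved
        have hsame : ∀ w, T.AncEq u w → Δi w = Δprev w := by
          intro w hw
          refine hfix w (Or.inr ?_)
          intro hvw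
          rcases hvw.comparable hw with h | h
          · exact hanc h
          · exact hnotdesc u huv h
        have hup' : UpCanonicalOn T u Δprev → UpCanonicalOn T u Δi := by
          rintro ⟨x₀, y₀, h⟩
          exact ⟨x₀, y₀, fun w hw => (hsame w hw).trans (h w hw)⟩
        have hdown' : DownCanonicalOn T u Δprev → DownCanonicalOn T u Δi := by
          rintro ⟨Γ', hg, h⟩
          exact ⟨Γ', hg, fun w hw => (hsame w hw).trans (h w hw)⟩
        have hAu := hA u huv
        constructor
        · rcases hAu.1 with h | h
          · exact Or.inl (hup' h)
          · exact Or.inr (hdown' h)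
        · intro hroot
          rw [hsame u (OTree.AncEq.refl T u), (hfixboth u (Or.inr hanc)).2]
          exact ⟨fun hle => hup' ((hAu.2 hroot).1 hle),
            fun hlt => hdown' ((hAu.2 hroot).2 hlt)⟩
  -- grid drawing
  have hGrid : IsGridD Δi := by
    intro v
    by_cases hanc : T.AncEq vi v
    · rw [hform v hanc]
      rcases hε with hε1 | hε1 <;> rw [hε1]
      · exact ⟨⟨cx + relIdx T vi v, by dsimp only; rw [hcx']; push_cast; ring⟩,
          ⟨cy - (depthT T v : ℤ) + (depthT T vi : ℤ), by
            dsimp only; rw [hcy']; push_cast; ring⟩⟩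
      · exact ⟨⟨cx - relIdx T vi v, by dsimp only; rw [hcx']; push_cast; ring⟩,
          ⟨cy + (depthT T v : ℤ) - (depthT T vi : ℤ), by
            dsimp only; rw [hcy']; push_cast; ring⟩⟩
    · rw [hfix v (Or.inr hanc)]
      exact hGR v
  -- fixedness of the relevant edges in condition (b)
  have hbfix : ∀ u : V, ¬ visited (T.parent u) → T.parent u ≠ vi →
      Δi u = Δprev u ∧ Δi (T.parent u) = Δprev (T.parent u) := by
    intro u hv hne
    have hpnot : ¬ T.AncEq vi (T.parent u) := by
      intro h
      exact hv (hvis _ h hne)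
    apply hfixboth
    by_cases h : u = vi
    · exact Or.inl h
    · refine Or.inr ?_
      intro hanc
      exact hpnot (hparmem u hanc h)
  -- condition (b) for the new drawing
  have hBnew : ∀ u, u ≠ T.root → ¬ (visited (T.parent u) ∨ T.parent u = vi) →
      IsSector (Δi (T.parent u)) (S u) ∧
      boxAt (2 * N) (Δi u) ⊆ S u ∧
      (∀ w, Δi w ∈ S u → w = T.parent u ∨ T.AncEq u w) ∧
      (∀ w, w ≠ T.root → ¬ T.AncEq u w →
        segment ℝ (Δi w) (Δi (T.parent w)) ∩ S u ⊆ {Δi (T.parent u)}) ∧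
      (∃ cu : ℤ × ℤ,
        boxAt (2 * N) ((cu.1 : ℝ), (cu.2 : ℝ)) ⊆
          S u ∩ boxAt ℓ₀ (Δi (T.parent u)) ∧
        ((cu.2 : ℝ) ≤ (Δi (T.parent u)).2 ↔ (Δi u).2 ≤ (Δi (T.parent u)).2)) := by
    intro u huroot hpu'
    have hpv : ¬ visited (T.parent u) := fun h => hpu' (Or.inl h)
    have hpvi : T.parent u ≠ vi := fun h => hpu' (Or.inr h)
    obtain ⟨hsec, hbox2n, hnodes, hedges, cu, hcu, hcuy⟩ := hSb u huroot hpv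
    obtain ⟨hfu, hfpu⟩ := hbfix u hpv hpvi
    refine ⟨by rw [hfpu]; exact hsec, by rw [hfu]; exact hbox2n, ?_, ?_,
      ⟨cu, by rw [hfpu]; exact hcu, by rw [hfu, hfpu]; exact hcuy⟩⟩
    · intro w hw
      by_cases hanc : T.AncEq vi w
      · have hbig : Δi w ∈ boxAt (ℓ₀ + 4 * N) C := hboxsub (hinbox w hanc)
        rcases hSbox vi hvi₂ u huroot hpv ⟨Δi w, hw, hbig⟩ with h | h
        · exact absurd h hpvi
        · exact Or.inr (h ▸ hanc)
      · rw [hfix w (Or.inr hanc)] at hw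
        exact hnodes w hw
    · intro w hwroot hnanc z hz
      obtain ⟨hz1, hz2⟩ := hz
      by_cases hmov : T.AncEq vi w ∧ w ≠ vi
      · exfalso
        have hbig : z ∈ boxAt (ℓ₀ + 4 * N) C :=
          hboxsub (hseginbox w hmov.1 hmov.2 hz1)
        rcases hSbox vi hvi₂ u huroot hpv ⟨z, hz2, hbig⟩ with h | h
        · exact hpvi h
        · exact hnanc (h ▸ hmov.1)
      · rw [not_and_or, not_not] at hmov
        obtain ⟨hf1, hf2⟩ := hfixboth w (Or.symm hmov)
        rw [hf1, hf2] at hz1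
        have := hedges w hwroot hnanc ⟨hz1, hz2⟩
        rwa [hfpu]
  -- condition (c) for the new drawing
  have hCnew : ∀ v w, ¬ (visited v ∨ v = vi) → ¬ (visited w ∨ w = vi) → v ≠ w →
      boxAt (ℓ₀ + 4 * N) (Δi v) ∩ boxAt (ℓ₀ + 4 * N) (Δi w) = ∅ := by
    intro v w hv hw hne
    push_neg at hv hw
    rw [hfixunvis v hv.1 hv.2, hfixunvis w hw.1 hw.2]
    exact hC v w hv.1 hw.1 hne
  -- condition (d) for the new drawing
  have hDnew : ∀ v, ¬ (visited v ∨ v = vi) →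
      (∀ w, w ≠ v → Δi w ∉ boxAt (ℓ₀ + 4 * N) (Δi v)) ∧
      (∀ w, w ≠ T.root →
        (segment ℝ (Δi w) (Δi (T.parent w)) ∩
          boxAt (ℓ₀ + 4 * N) (Δi v)).Nonempty →
        T.parent w = v ∨ w = v) := by
    intro v hv
    push_neg at hv
    obtain ⟨hv1, hv2⟩ := hv
    have hvfix : Δi v = Δprev v := hfixunvis v hv1 hv2
    have hdisj : boxAt (ℓ₀ + 4 * N) C ∩ boxAt (ℓ₀ + 4 * N) (Δprev v) = ∅ :=
      hC vi v hvi₂ hv1 (Ne.symm hv2)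
    constructor
    · intro w hwne
      rw [hvfix]
      by_cases hanc : T.AncEq vi w
      · intro hmem
        have hbig : Δi w ∈ boxAt (ℓ₀ + 4 * N) C := hboxsub (hinbox w hanc)
        exact absurd (Set.mem_inter hbig hmem) (by rw [hdisj]; exact id)
      · rw [hfix w (Or.inr hanc)]
        exact (hD v hv1).1 w hwne
    · intro w hwroot hne'
      rw [hvfix] at hne'
      by_cases hmov : T.AncEq vi w ∧ w ≠ vi
      · exfalso
        obtain ⟨z, hz1, hz2⟩ := hne'
        have hbig : z ∈ boxAt (ℓ₀ + 4 * N) C :=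
          hboxsub (hseginbox w hmov.1 hmov.2 hz1)
        exact absurd (Set.mem_inter hbig hz2) (by rw [hdisj]; exact id)
      · rw [not_and_or, not_not] at hmov
        obtain ⟨hf1, hf2⟩ := hfixboth w (Or.symm hmov)
        rw [hf1, hf2] at hne'
        exact (hD v hv1).2 w hwroot hne'
  -- order preservation
  have hOPnew : IsOrderPreservingD T Δi := by
    intro v
    by_cases hanc : T.AncEq vi v
    · -- v is in the subtree of vi: the canonical configuration
      have hchildmem : ∀ c, T.IsChild c v → T.AncEq vi c := fun c hc =>
        hanc.trans ⟨1, hc.2⟩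
      have hcne : ∀ c, T.IsChild c v → c ≠ v := by
        intro c hc h
        exact OTree.parent_ne_self hc.1 (h ▸ hc.2)
      have hcidx : ∀ c, T.IsChild c v →
          (1:ℝ) ≤ (relIdx T vi c : ℝ) - relIdx T vi v := by
        intro c hc
        have hlt : relIdx T vi v + 1 ≤ relIdx T vi c :=
          relIdx_lt_relIdx hanc (preLT_of_anc ⟨1, hc.2⟩ (Ne.symm (hcne c hc)))
        have : (relIdx T vi v : ℝ) + 1 ≤ (relIdx T vi c : ℝ) := by exact_mod_cast hlt
        linarith
      have hcidxN : ∀ c, T.IsChild c v →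
          (relIdx T vi c : ℝ) - relIdx T vi v ≤ N := by
        intro c hc
        have h1 := hidxN c
        have h2 : (0:ℝ) ≤ (relIdx T vi v : ℝ) := by positivity
        linarith
      have hcx : ∀ c, T.IsChild c v →
          (Δi c).1 - (Δi v).1 = ε * ((relIdx T vi c : ℝ) - relIdx T vi v) := by
        intro c hc
        rw [hform c (hchildmem c hc), hform v hanc]; dsimp only; ring
      have hcy : ∀ c, T.IsChild c v → (Δi c).2 - (Δi v).2 = -ε := by
        intro c hc
        have hdc : (depthT T c : ℝ) = (depthT T v : ℝ) + 1 := by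
          have hh := OTree.depthT_parent hc.1
          rw [hc.2] at hh
          exact_mod_cast hh
        rw [hform c (hchildmem c hc), hform v hanc]; dsimp only
        rw [hdc]; ring
      have hrankidx : ∀ c1 c2, T.IsChild c1 v → T.IsChild c2 v →
          T.rank c1 < T.rank c2 → (relIdx T vi c1 : ℝ) < relIdx T vi c2 := by
        intro c1 c2 h1 h2 hr
        have := relIdx_lt_relIdx (hchildmem c1 h1)
          (preLT_sibling h1.1 h2.1 (h1.2.trans h2.2.symm) hr)
        exact_mod_cast this
      have hpary' : v ≠ T.root →
          (ε = 1 → 0 ≤ (Δi (T.parent v)).2 - (Δi v).2) ∧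
          (ε = -1 → (Δi (T.parent v)).2 - (Δi v).2 < 0) := by
        intro hvroot
        by_cases hvvi : v = vi
        · subst hvvi
          rw [hfixvi, (hfixboth v (Or.inl rfl)).2]
          exact ⟨fun h => by linarith [(hpary hvroot).1 h],
            fun h => by linarith [(hpary hvroot).2 h]⟩
        · have hpmem := hparmem v hanc hvvi
          have hdp : (depthT T (T.parent v) : ℝ) = (depthT T v : ℝ) - 1 := by
            have hh := OTree.depthT_parent hvroot
            have : (depthT T v : ℝ) = (depthT T (T.parent v) : ℝ) + 1 := by
              exact_mod_cast hh
            linarith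
          have hpe : (Δi (T.parent v)).2 - (Δi v).2 = ε := by
            rw [hform _ hpmem, hform v hanc]; dsimp only
            rw [hdp]; ring
          rw [hpe]
          exact ⟨fun h => by rw [h]; norm_num, fun h => by rw [h]; norm_num⟩
      have hpi := Real.pi_pos
      rcases hε with hε1 | hε1
      · -- upward: window based at a slightly negative angle
        set a := Real.arcsin (-(1 / Real.sqrt (N ^ 2 + 2))) with hadef
        have hN0 : (0:ℝ) ≤ N := by linarith
        have ha1 : a < 0 := arcsin_target_neg hN0
        have ha2 : -(π/2) < a := arcsin_target_gt hN0
        have hang : ∀ c, T.IsChild c v → dirAngle (Δi v) (Δi c) =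
            Real.arcsin (-(1 / Real.sqrt
              (((relIdx T vi c:ℝ) - relIdx T vi v) ^ 2 + 1))) := by
          intro c hc
          rw [dirAngle_down_right (by rw [hcx c hc, hε1]; linarith [hcidx c hc])
            (by rw [hcy c hc, hε1]; try norm_num), hcx c hc, hε1, one_mul]
        have hnormc : ∀ c, T.IsChild c v →
            angFrom Δi a v c = dirAngle (Δi v) (Δi c) + 2 * π := by
          intro c hc
          unfold angFrom
          apply normAngle_eq_add
          · rw [hang c hc]
            have := Real.neg_pi_div_two_le_arcsin (-(1 / Real.sqrt
              (((relIdx T vi c:ℝ) - relIdx T vi v) ^ 2 + 1)))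
            linarith
          · rw [hang c hc]
            exact arcsin_term_lt_target (hcidx c hc) (hcidxN c hc)
        refine ⟨a, ?_, ?_⟩
        · intro c1 c2 h1 h2 hr
          rw [hnormc c1 h1, hnormc c2 h2, hang c1 h1, hang c2 h2]
          have := arcsin_term_mono (hcidx c1 h1)
            (by linarith [hrankidx c1 c2 h1 h2 hr] :
              (relIdx T vi c1 : ℝ) - relIdx T vi v <
                (relIdx T vi c2 : ℝ) - relIdx T vi v)
          linarith
        · intro hvroot c hc
          have him : 0 ≤ (Δi (T.parent v)).2 - (Δi v).2 := (hpary' hvroot).1 hε1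
          have hp1 : 0 ≤ dirAngle (Δi v) (Δi (T.parent v)) := dirAngle_nonneg him
          have hp2 : dirAngle (Δi v) (Δi (T.parent v)) ≤ π := dirAngle_le_pi _ _
          have hnp : angFrom Δi a v (T.parent v)
              = dirAngle (Δi v) (Δi (T.parent v)) :=
            normAngle_eq_self (by linarith) (by linarith)
          rw [hnp, hnormc c hc, hang c hc]
          have h3 := Real.neg_pi_div_two_le_arcsin (-(1 / Real.sqrt
            (((relIdx T vi c:ℝ) - relIdx T vi v) ^ 2 + 1)))
          linarith
      · -- downward: window based at -π
        have hang : ∀ c, T.IsChild c v → dirAngle (Δi v) (Δi c) =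
            Real.arcsin (-(1 / Real.sqrt
              (((relIdx T vi c:ℝ) - relIdx T vi v) ^ 2 + 1))) + π := by
          intro c hc
          have hsq : ((Δi c).1 - (Δi v).1) ^ 2
              = ((relIdx T vi c:ℝ) - relIdx T vi v) ^ 2 := by
            rw [hcx c hc, hε1]; ring
          rw [dirAngle_up_left (by rw [hcx c hc, hε1]; linarith [hcidx c hc])
            (by rw [hcy c hc, hε1]; try norm_num), hsq]
        have hbnd : ∀ c, T.IsChild c v →
            -(π/2) < Real.arcsin (-(1 / Real.sqrt
              (((relIdx T vi c:ℝ) - relIdx T vi v) ^ 2 + 1))) ∧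
            Real.arcsin (-(1 / Real.sqrt
              (((relIdx T vi c:ℝ) - relIdx T vi v) ^ 2 + 1))) < 0 := by
          intro c hc
          exact ⟨arcsin_term_ge (hcidx c hc), arcsin_term_neg (hcidx c hc)⟩
        have hnormc : ∀ c, T.IsChild c v →
            angFrom Δi (-π) v c = dirAngle (Δi v) (Δi c) := by
          intro c hc
          obtain ⟨hb1, hb2⟩ := hbnd c hc
          refine normAngle_eq_self ?_ ?_
          · rw [hang c hc]; linarith
          · rw [hang c hc]; linarith
        refine ⟨-π, ?_, ?_⟩
        · intro c1 c2 h1 h2 hr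
          rw [hnormc c1 h1, hnormc c2 h2, hang c1 h1, hang c2 h2]
          have := arcsin_term_mono (hcidx c1 h1)
            (by linarith [hrankidx c1 c2 h1 h2 hr] :
              (relIdx T vi c1 : ℝ) - relIdx T vi v <
                (relIdx T vi c2 : ℝ) - relIdx T vi v)
          linarith
        · intro hvroot c hc
          have him : (Δi (T.parent v)).2 - (Δi v).2 < 0 := (hpary' hvroot).2 hε1
          have hp1 : dirAngle (Δi v) (Δi (T.parent v)) < 0 := dirAngle_neg him
          have hp2 : -π < dirAngle (Δi v) (Δi (T.parent v)) :=
            dirAngle_gt_neg_pi _ _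
          have hnp : angFrom Δi (-π) v (T.parent v)
              = dirAngle (Δi v) (Δi (T.parent v)) :=
            normAngle_eq_self (by linarith) (by linarith)
          obtain ⟨hb1, hb2⟩ := hbnd c hc
          rw [hnp, hnormc c hc, hang c hc]
          linarith
    · -- v outside the subtree: all incident positions are unchanged
      obtain ⟨a, h1, h2⟩ := hOP v
      have hfev : Δi v = Δprev v := hfix v (Or.inr hanc)
      have hchildfix : ∀ c, T.IsChild c v → Δi c = Δprev c := by
        intro c hc
        apply hfix
        by_cases h : c = vi
        · exact Or.inl h
        · refine Or.inr (fun hvc => hanc ?_)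
          have hmem := hparmem c hvc h
          rwa [hc.2] at hmem
      have heq : ∀ w, Δi w = Δprev w → angFrom Δi a v w = angFrom Δprev a v w := by
        intro w hwq
        unfold angFrom
        rw [hfev, hwq]
      refine ⟨a, ?_, ?_⟩
      · intro c1 c2 hc1 hc2 hr
        rw [heq c1 (hchildfix c1 hc1), heq c2 (hchildfix c2 hc2)]
        exact h1 c1 c2 hc1 hc2 hr
      · intro hvroot c hc
        rw [heq c (hchildfix c hc), heq _ (hfixboth v (Or.inr hanc)).2]
        exact h2 hvroot c hc
  exact ⟨hOPnew, ⟨hInj, hPlanNew⟩, hGrid, hAnew, ⟨S, hBnew,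
    fun u u' h1 h2 h3 h4 h5 => hSdisj u u' h1 h2 (fun h => h3 (Or.inl h)) h4 h5,
    fun v hv u h1 h2 h3 => hSbox v (fun h => hv (Or.inl h)) u h1
      (fun h => h2 (Or.inl h)) (by
        rwa [hfixunvis v (fun h => hv (Or.inl h)) (fun h => hv (Or.inr h))] at h3)⟩,
    hCnew, hDnew⟩
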